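/- arXiv:2306.17013 — 3 statements merged into one kernel-verified Lean document; each statement's English description precedes it below -/
import Mathlib

section
/- Let d ≥ 1 and α, β ∈ ℝ with α + β > d and α < d. Then for every n ∈ ℤ^d, the sum over all decompositions n = n₁ + n₂ of ⟨n₁⟩^{-α}⟨n₂⟩^{-β} is bounded by a constant times ⟨n⟩^{-α+λ}, where λ = max(d - β, 0) if β ≠ d, and λ can be taken to be any ε > 0 if β = d. -/
/-- Japanese bracket `⟨n⟩ = (1 + |n|²)^{1/2}` of a lattice point `n ∈ ℤ^d`. -/
noncomputable def jb {d : ℕ} (n : Fin d → ℤ) : ℝ :=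
  Real.sqrt (1 + ∑ i, (n i : ℝ) ^ 2)

namespace JB

variable {d : ℕ}

lemma sq_sum_nonneg (n : Fin d → ℤ) : (0:ℝ) ≤ ∑ i, (n i : ℝ) ^ 2 :=
  Finset.sum_nonneg fun _ _ => sq_nonneg _

lemma one_le_jb (n : Fin d → ℤ) : 1 ≤ jb n := by
  rw [jb]
  have h := sq_sum_nonneg n
  nlinarith [Real.sq_sqrt (by linarith : (0:ℝ) ≤ 1 + ∑ i, (n i : ℝ) ^ 2),
    Real.sqrt_nonneg (1 + ∑ i, (n i : ℝ) ^ 2)]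

lemma jb_pos (n : Fin d → ℤ) : 0 < jb n := lt_of_lt_of_le one_pos (one_le_jb n)

lemma jb_nonneg (n : Fin d → ℤ) : 0 ≤ jb n := (jb_pos n).le

lemma sq_jb (n : Fin d → ℤ) : jb n ^ 2 = 1 + ∑ i, (n i : ℝ) ^ 2 := by
  rw [jb, Real.sq_sqrt (by linarith [sq_sum_nonneg n])]

lemma abs_coord_le_jb (n : Fin d → ℤ) (i : Fin d) : |(n i : ℝ)| ≤ jb n := by
  rw [← Real.sqrt_sq_eq_abs, jb]
  apply Real.sqrt_le_sqrt
  have h := Finset.single_le_sum (f := fun i => (n i : ℝ)^2) (fun j _ => sq_nonneg _)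
    (Finset.mem_univ i)
  linarith

lemma jb_neg (n : Fin d → ℤ) : jb (-n) = jb n := by
  simp [jb]

lemma jb_triangle (a b : Fin d → ℤ) : jb (a + b) ≤ jb a + jb b := by
  have hcs : ∑ i, (a i : ℝ) * (b i : ℝ) ≤ jb a * jb b := by
    calc ∑ i, (a i : ℝ) * (b i : ℝ)
        ≤ Real.sqrt (∑ i, (a i:ℝ)^2) * Real.sqrt (∑ i, (b i:ℝ)^2) :=
          Real.sum_mul_le_sqrt_mul_sqrt _ _ _
      _ ≤ jb a * jb b := by
          apply mul_le_mul (Real.sqrt_le_sqrt (by linarith)) (Real.sqrt_le_sqrt (by linarith))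
            (Real.sqrt_nonneg _) (jb_nonneg a)
  have h2 : jb (a + b) ^ 2 ≤ (jb a + jb b) ^ 2 := by
    rw [sq_jb, add_sq, sq_jb, sq_jb]
    have he : ∑ i, ((a + b) i : ℝ)^2
        = ∑ i, ((a i:ℝ)^2 + 2 * ((a i:ℝ)*(b i:ℝ)) + (b i:ℝ)^2) := by
      apply Finset.sum_congr rfl
      intro i _
      have : ((a+b) i : ℝ) = (a i : ℝ) + (b i : ℝ) := by push_cast [Pi.add_apply]; ring
      rw [this]; ring
    rw [he, Finset.sum_add_distrib, Finset.sum_add_distrib, ← Finset.mul_sum]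
    nlinarith [jb_nonneg a, jb_nonneg b, one_le_jb a, one_le_jb b]
  calc jb (a+b) ≤ |jb (a+b)| := le_abs_self _
    _ ≤ jb a + jb b := abs_le_of_sq_le_sq h2 (by linarith [jb_nonneg a, jb_nonneg b])

/-- Shell index: `2^(sh m) ≤ jb m < 2^(sh m + 1)`. -/
noncomputable def sh (m : Fin d → ℤ) : ℕ := ⌊Real.logb 2 (jb m)⌋₊

lemma logb_nonneg (m : Fin d → ℤ) : 0 ≤ Real.logb 2 (jb m) :=
  Real.logb_nonneg one_lt_two (one_le_jb m)

lemma pow_sh_le (m : Fin d → ℤ) : (2:ℝ) ^ (sh m) ≤ jb m := by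
  have h1 : ((sh m : ℝ)) ≤ Real.logb 2 (jb m) := Nat.floor_le (logb_nonneg m)
  have := Real.rpow_le_rpow_of_exponent_le (x := 2) one_le_two h1
  rw [Real.rpow_logb two_pos (by norm_num) (jb_pos m)] at this
  calc (2:ℝ)^(sh m) = (2:ℝ) ^ (sh m : ℝ) := by rw [Real.rpow_natCast]
    _ ≤ jb m := this

lemma jb_lt_pow_sh (m : Fin d → ℤ) : jb m < (2:ℝ) ^ (sh m + 1) := by
  have h1 : Real.logb 2 (jb m) < (sh m + 1 : ℕ) := by
    exact_mod_cast Nat.lt_floor_add_one (Real.logb 2 (jb m))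
  have := Real.rpow_lt_rpow_of_exponent_lt (x := 2) one_lt_two
    (by exact_mod_cast h1 : Real.logb 2 (jb m) < ((sh m + 1 : ℕ) : ℝ))
  rw [Real.rpow_logb two_pos (by norm_num) (jb_pos m), Real.rpow_natCast] at this
  exact this

/-- Box of side `2^(j+2)+1` containing shell `j`. -/
noncomputable def box (d : ℕ) (j : ℕ) : Finset (Fin d → ℤ) :=
  Fintype.piFinset fun _ => Finset.Icc (-(2^(j+1)) : ℤ) (2^(j+1))

lemma mem_box_of_sh {m : Fin d → ℤ} {j : ℕ} (h : sh m = j) : m ∈ box d j := by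
  rw [box, Fintype.mem_piFinset]
  intro i
  rw [Finset.mem_Icc]
  have h1 : |(m i : ℝ)| ≤ jb m := abs_coord_le_jb m i
  have h2 : jb m < (2:ℝ)^(j+1) := h ▸ jb_lt_pow_sh m
  have h3 : |(m i : ℝ)| ≤ (((2^(j+1) : ℤ) : ℝ)) := by push_cast; linarith
  have h4 := abs_le.mp h3
  constructor
  · exact_mod_cast h4.1
  · exact_mod_cast h4.2

lemma card_box_le (j : ℕ) : ((box d j).card : ℝ) ≤ (2:ℝ) ^ ((j+3)*d) := by
  rw [box]
  rw [Fintype.card_piFinset]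
  have hc : (Finset.Icc (-(2^(j+1)) : ℤ) (2^(j+1))).card = 2^(j+2) + 1 := by
    rw [Int.card_Icc]
    have h0 : (2:ℤ)^(j+1) + 1 - (-(2^(j+1))) = ((2^(j+2) + 1 : ℕ) : ℤ) := by push_cast; ring
    rw [h0, Int.toNat_natCast]
  rw [Finset.prod_congr rfl (fun i _ => hc), Finset.prod_const, Finset.card_univ,
    Fintype.card_fin]
  have h1 : ((2^(j+2) + 1 : ℕ) : ℝ) ≤ (2:ℝ)^(j+3) := by
    push_cast
    have : (2:ℝ)^(j+3) = 2^(j+2) + 2^(j+2) := by ring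
    have h2 : (1:ℝ) ≤ 2^(j+2) := one_le_pow₀ one_le_two
    rw [this]; linarith
  calc (((2^(j+2)+1)^d : ℕ) : ℝ) = (((2^(j+2)+1 : ℕ):ℝ))^d := by push_cast; ring
    _ ≤ ((2:ℝ)^(j+3))^d := pow_le_pow_left₀ (by positivity) h1 d
    _ = (2:ℝ)^((j+3)*d) := by rw [← pow_mul]

open scoped ENNReal Classical

lemma shell_value_le (γ : ℝ) (m : Fin d → ℤ) :
    jb m ^ (-γ) ≤ (2:ℝ) ^ |γ| * (2:ℝ) ^ (-(sh m : ℝ) * γ) := by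
  have h2 : (0:ℝ) < 2 := two_pos
  have hsh : (2:ℝ) ^ (sh m) = (2:ℝ) ^ ((sh m : ℝ)) := (Real.rpow_natCast 2 (sh m)).symm
  rcases le_or_gt 0 γ with hγ | hγ
  · have h1 : jb m ^ (-γ) ≤ ((2:ℝ) ^ (sh m)) ^ (-γ) :=
      Real.rpow_le_rpow_of_nonpos (by positivity) (pow_sh_le m) (neg_nonpos.mpr hγ)
    rw [hsh, ← Real.rpow_mul h2.le] at h1
    have h3 : (1:ℝ) ≤ (2:ℝ) ^ |γ| := Real.one_le_rpow one_le_two (abs_nonneg γ)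
    calc jb m ^ (-γ) ≤ (2:ℝ) ^ ((sh m : ℝ) * -γ) := h1
      _ = (2:ℝ) ^ (-(sh m : ℝ) * γ) := by ring_nf
      _ ≤ (2:ℝ) ^ |γ| * (2:ℝ) ^ (-(sh m : ℝ) * γ) := by
          nlinarith [Real.rpow_pos_of_pos h2 (-(sh m : ℝ) * γ)]
  · have h1 : jb m ^ (-γ) ≤ ((2:ℝ) ^ (sh m + 1)) ^ (-γ) :=
      Real.rpow_le_rpow (jb_nonneg m) (jb_lt_pow_sh m).le (by linarith)
    rw [← Real.rpow_natCast 2 (sh m + 1), ← Real.rpow_mul h2.le] at h1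
    have he : ((sh m + 1 : ℕ) : ℝ) * -γ = |γ| + (-(sh m : ℝ) * γ) := by
      rw [abs_of_neg hγ]; push_cast; ring
    rw [he, Real.rpow_add h2] at h1
    exact h1

lemma region_le (γ : ℝ) (P : (Fin d → ℤ) → Prop) (Q : ℕ → Prop)
    (h : ∀ m, P m → Q (sh m)) :
    ∑' m : Fin d → ℤ, (if P m then ENNReal.ofReal (jb m ^ (-γ)) else 0)
      ≤ ENNReal.ofReal ((2:ℝ)^(3*d) * (2:ℝ)^|γ|) *
        ∑' j : ℕ, (if Q j then ENNReal.ofReal ((2:ℝ)^((j:ℝ)*((d:ℝ)-γ))) else 0) := by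
  set E : (Fin d → ℤ) → ℝ≥0∞ := fun m => if P m then ENNReal.ofReal (jb m ^ (-γ)) else 0
    with hE
  have step1 : ∑' m, E m = ∑' j : ℕ, ∑' m : Fin d → ℤ, (if j = sh m then E m else 0) := by
    rw [← ENNReal.tsum_comm]
    exact tsum_congr fun m => (tsum_ite_eq (sh m) (fun _ => E m)).symm
  rw [step1]
  have step2 : ∀ j : ℕ, ∑' m : Fin d → ℤ, (if j = sh m then E m else 0)
      ≤ (if Q j then ENNReal.ofReal ((2:ℝ)^(3*d) * (2:ℝ)^|γ|)
          * ENNReal.ofReal ((2:ℝ)^((j:ℝ)*((d:ℝ)-γ))) else 0) := by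
    intro j
    by_cases hQ : Q j
    · rw [if_pos hQ]
      set A : ℝ≥0∞ := ENNReal.ofReal ((2:ℝ) ^ |γ| * (2:ℝ) ^ (-(j : ℝ) * γ)) with hA
      have hpw : ∀ m : Fin d → ℤ, (if j = sh m then E m else 0)
          ≤ (if m ∈ box d j then A else 0) := by
        intro m
        by_cases hj : j = sh m
        · rw [if_pos hj, if_pos (mem_box_of_sh hj.symm)]
          by_cases hP : P m
          · simp only [hE, if_pos hP, hA]
            apply ENNReal.ofReal_le_ofReal
            have := shell_value_le γ m
            rw [← hj] at this
            exact this
          · simp only [hE, if_neg hP]; exact zero_le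
        · rw [if_neg hj]; exact zero_le
      calc ∑' m : Fin d → ℤ, (if j = sh m then E m else 0)
          ≤ ∑' m : Fin d → ℤ, (if m ∈ box d j then A else 0) :=
            ENNReal.tsum_le_tsum hpw
        _ = ∑ m ∈ box d j, A := by
            rw [tsum_eq_sum (s := box d j) (fun m hm => if_neg hm)]
            exact Finset.sum_congr rfl fun m hm => if_pos hm
        _ = ((box d j).card : ℝ≥0∞) * A := by
            rw [Finset.sum_const, nsmul_eq_mul]
        _ ≤ ENNReal.ofReal ((2:ℝ)^((j+3)*d)) * A := by
            apply mul_le_mul_left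
            rw [← ENNReal.ofReal_natCast]
            exact ENNReal.ofReal_le_ofReal (card_box_le j)
        _ = ENNReal.ofReal ((2:ℝ)^(3*d) * (2:ℝ)^|γ|)
            * ENNReal.ofReal ((2:ℝ)^((j:ℝ)*((d:ℝ)-γ))) := by
            rw [hA, ← ENNReal.ofReal_mul (by positivity), ← ENNReal.ofReal_mul (by positivity)]
            congr 1
            rw [← Real.rpow_natCast 2 ((j+3)*d), ← Real.rpow_natCast 2 (3*d)]
            simp only [← Real.rpow_add two_pos]
            congr 1
            push_cast
            ring
    · rw [if_neg hQ]
      have : ∀ m : Fin d → ℤ, (if j = sh m then E m else 0) = 0 := by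
        intro m
        by_cases hj : j = sh m
        · rw [if_pos hj]
          by_cases hP : P m
          · exact absurd (hj ▸ h m hP) hQ
          · simp only [hE, if_neg hP]
        · rw [if_neg hj]
      simp only [this, tsum_zero]
      exact le_refl 0
  calc ∑' j : ℕ, ∑' m : Fin d → ℤ, (if j = sh m then E m else 0)
      ≤ ∑' j : ℕ, (if Q j then ENNReal.ofReal ((2:ℝ)^(3*d) * (2:ℝ)^|γ|)
          * ENNReal.ofReal ((2:ℝ)^((j:ℝ)*((d:ℝ)-γ))) else 0) := ENNReal.tsum_le_tsum step2
    _ = ENNReal.ofReal ((2:ℝ)^(3*d) * (2:ℝ)^|γ|) *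
        ∑' j : ℕ, (if Q j then ENNReal.ofReal ((2:ℝ)^((j:ℝ)*((d:ℝ)-γ))) else 0) := by
        rw [← ENNReal.tsum_mul_left]
        exact tsum_congr fun j => by rw [mul_ite, mul_zero]

lemma rj_eq_pow (γ : ℝ) (j : ℕ) :
    ENNReal.ofReal ((2:ℝ)^((j:ℝ)*((d:ℝ)-γ))) = (ENNReal.ofReal ((2:ℝ)^((d:ℝ)-γ)))^j := by
  rw [← ENNReal.ofReal_pow (by positivity)]
  congr 1
  rw [← Real.rpow_natCast ((2:ℝ)^((d:ℝ)-γ)) j, ← Real.rpow_mul (by norm_num)]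
  ring_nf

lemma jsum_tail (γ : ℝ) (hγ : (d:ℝ) < γ) : ∃ K : ℝ≥0∞, K ≠ ⊤ ∧ ∀ R : ℝ, 0 < R →
    ∑' j : ℕ, (if R < (2:ℝ)^(j+1) then ENNReal.ofReal ((2:ℝ)^((j:ℝ)*((d:ℝ)-γ))) else 0)
      ≤ K * ENNReal.ofReal (R ^ ((d:ℝ) - γ)) := by
  set x : ℝ := (2:ℝ)^((d:ℝ)-γ) with hx
  have hx0 : 0 < x := Real.rpow_pos_of_pos two_pos _
  have hx1 : x < 1 := Real.rpow_lt_one_of_one_lt_of_neg one_lt_two (by linarith)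
  set q : ℝ≥0∞ := ENNReal.ofReal x with hq
  have hq1 : q < 1 := by
    rw [hq, ← ENNReal.ofReal_one]
    exact ENNReal.ofReal_lt_ofReal_iff_of_nonneg hx0.le |>.mpr hx1
  have hgeom : (1 - q)⁻¹ ≠ ⊤ := by
    simp only [ne_eq, ENNReal.inv_eq_top, tsub_eq_zero_iff_le]
    exact fun h => absurd (lt_of_lt_of_le hq1 h) (lt_irrefl _)
  refine ⟨(1 - q)⁻¹ * ENNReal.ofReal ((2:ℝ)^(γ-(d:ℝ))), by
    exact ENNReal.mul_ne_top hgeom ENNReal.ofReal_ne_top, ?_⟩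
  intro R hR
  set M : ℝ := max R 1 with hM
  have hM1 : 1 ≤ M := le_max_right _ _
  set j₀ : ℕ := ⌊Real.logb 2 M⌋₊ with hj₀
  have hlow : (2:ℝ)^j₀ ≤ M := by
    have h1 : (j₀ : ℝ) ≤ Real.logb 2 M := Nat.floor_le (Real.logb_nonneg one_lt_two hM1)
    have := Real.rpow_le_rpow_of_exponent_le one_le_two h1
    rwa [Real.rpow_logb two_pos (by norm_num) (by linarith), Real.rpow_natCast] at this
  have hhigh : M < (2:ℝ)^(j₀+1) := by
    have h1 : Real.logb 2 M < ((j₀+1 : ℕ) : ℝ) := by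
      exact_mod_cast Nat.lt_floor_add_one (Real.logb 2 M)
    have := Real.rpow_lt_rpow_of_exponent_lt one_lt_two h1
    rwa [Real.rpow_logb two_pos (by norm_num) (by linarith), Real.rpow_natCast] at this
  have hmono : ∀ j : ℕ, R < (2:ℝ)^(j+1) → j₀ ≤ j := by
    intro j hj
    by_contra hc
    push_neg at hc
    have h1 : (2:ℝ)^(j+1) ≤ (2:ℝ)^j₀ := by
      apply pow_le_pow_right₀ one_le_two
      omega
    have h2 : (2:ℝ)^j₀ ≤ M := hlow
    have h3 : M ≤ max R 1 := le_refl _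
    rcases le_or_gt R 1 with h | h
    · have : j₀ = 0 := by
        have : M = 1 := by rw [hM, max_eq_right h]
        rw [hj₀, this]
        simp
      omega
    · have : M = R := by rw [hM, max_eq_left h.le]
      rw [this] at h2
      linarith
  calc ∑' j : ℕ, (if R < (2:ℝ)^(j+1) then ENNReal.ofReal ((2:ℝ)^((j:ℝ)*((d:ℝ)-γ))) else 0)
      ≤ ∑' j : ℕ, (if j₀ ≤ j then q^j else 0) := by
        apply ENNReal.tsum_le_tsum
        intro j
        by_cases hj : R < (2:ℝ)^(j+1)
        · rw [if_pos hj, if_pos (hmono j hj), rj_eq_pow]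
        · rw [if_neg hj]; exact zero_le
    _ = ∑' k : ℕ, q^(j₀+k) := by
        have hinj : Function.Injective (fun k : ℕ => j₀ + k) := fun a b hab => by
          simpa using hab
        have hsupp : Function.support (fun j => if j₀ ≤ j then q^j else 0)
            ⊆ Set.range (fun k : ℕ => j₀ + k) := by
          intro j hj
          rcases le_or_gt j₀ j with h | h
          · exact ⟨j - j₀, by show j₀ + (j - j₀) = j; omega⟩
          · exact absurd (by simp only [if_neg (not_le.mpr h)] :
              (fun j => if j₀ ≤ j then q^j else 0) j = 0) hj
        have heq := Function.Injective.tsum_eq hinj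
          (f := fun j => if j₀ ≤ j then q^j else 0) hsupp
        rw [← heq]
        exact tsum_congr fun k => by
          show (if j₀ ≤ j₀ + k then q ^ (j₀+k) else 0) = q ^ (j₀ + k)
          rw [if_pos (Nat.le_add_right _ _)]
    _ = q^j₀ * ∑' k : ℕ, q^k := by
        simp only [pow_add, ENNReal.tsum_mul_left]
    _ = q^j₀ * (1 - q)⁻¹ := by rw [ENNReal.tsum_geometric]
    _ ≤ (ENNReal.ofReal ((2:ℝ)^(γ-(d:ℝ))) * ENNReal.ofReal (R^((d:ℝ)-γ))) * (1-q)⁻¹ := by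
        apply mul_le_mul_left
        rw [hq, ← ENNReal.ofReal_pow hx0.le, ← ENNReal.ofReal_mul (by positivity)]
        apply ENNReal.ofReal_le_ofReal
        have hR2 : 0 < R/2 := by linarith
        have hj0R : R/2 ≤ (2:ℝ)^j₀ := by
          have : R ≤ M := le_max_left _ _
          have h2 : R < 2 * (2:ℝ)^j₀ := by
            have : M < (2:ℝ)^(j₀+1) := hhigh
            rw [pow_succ] at this
            nlinarith [le_max_left R 1]
          linarith
        have hxj : x^j₀ = ((2:ℝ)^j₀) ^ ((d:ℝ)-γ) := by
          rw [← Real.rpow_natCast x j₀, hx, ← Real.rpow_mul (by norm_num),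
            ← Real.rpow_natCast 2 j₀, ← Real.rpow_mul (by norm_num)]
          congr 1
          ring
        rw [hxj]
        calc ((2:ℝ)^j₀) ^ ((d:ℝ)-γ) ≤ (R/2) ^ ((d:ℝ)-γ) :=
              Real.rpow_le_rpow_of_nonpos hR2 hj0R (by linarith)
          _ = (2:ℝ)^(γ-(d:ℝ)) * R^((d:ℝ)-γ) := by
              have h2 : ((2:ℝ)^((d:ℝ)-γ))⁻¹ = (2:ℝ)^(γ-(d:ℝ)) := by
                rw [← Real.rpow_neg (by norm_num : (0:ℝ) ≤ 2)]
                congr 1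
                ring
              rw [Real.div_rpow hR.le (by norm_num), div_eq_mul_inv, h2]
              ring
    _ = ((1-q)⁻¹ * ENNReal.ofReal ((2:ℝ)^(γ-(d:ℝ)))) * ENNReal.ofReal (R^((d:ℝ)-γ)) := by
        ring

lemma jsum_ball (γ : ℝ) (hγ : γ < (d:ℝ)) : ∃ K : ℝ≥0∞, K ≠ ⊤ ∧ ∀ R : ℝ, 1 ≤ R →
    ∑' j : ℕ, (if (2:ℝ)^j ≤ R then ENNReal.ofReal ((2:ℝ)^((j:ℝ)*((d:ℝ)-γ))) else 0)
      ≤ K * ENNReal.ofReal (R ^ ((d:ℝ) - γ)) := by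
  set x : ℝ := (2:ℝ)^((d:ℝ)-γ) with hx
  have hx0 : 0 < x := Real.rpow_pos_of_pos two_pos _
  have hx1 : 1 < x := Real.one_lt_rpow_iff_of_pos two_pos |>.mpr (Or.inl ⟨one_lt_two, by linarith⟩)
  refine ⟨ENNReal.ofReal (x * (x-1)⁻¹), ENNReal.ofReal_ne_top, ?_⟩
  intro R hR
  set J : ℕ := ⌊Real.logb 2 R⌋₊ with hJ
  have hRpos : (0:ℝ) < R := by linarith
  have hlow : (2:ℝ)^J ≤ R := by
    have h1 : (J : ℝ) ≤ Real.logb 2 R := Nat.floor_le (Real.logb_nonneg one_lt_two hR)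
    have := Real.rpow_le_rpow_of_exponent_le one_le_two h1
    rwa [Real.rpow_logb two_pos (by norm_num) hRpos, Real.rpow_natCast] at this
  have hhigh : R < (2:ℝ)^(J+1) := by
    have h1 : Real.logb 2 R < ((J+1:ℕ):ℝ) := by
      exact_mod_cast Nat.lt_floor_add_one (Real.logb 2 R)
    have := Real.rpow_lt_rpow_of_exponent_lt one_lt_two h1
    rwa [Real.rpow_logb two_pos (by norm_num) hRpos, Real.rpow_natCast] at this
  have hsupp : ∀ j : ℕ, j ∉ Finset.range (J+1) →
      (if (2:ℝ)^j ≤ R then ENNReal.ofReal ((2:ℝ)^((j:ℝ)*((d:ℝ)-γ))) else 0) = 0 := by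
    intro j hj
    rw [Finset.mem_range, not_lt] at hj
    rw [if_neg]
    push_neg
    calc R < (2:ℝ)^(J+1) := hhigh
      _ ≤ (2:ℝ)^j := pow_le_pow_right₀ one_le_two hj
  have hx1' : (0:ℝ) < x - 1 := by linarith
  calc ∑' j : ℕ, (if (2:ℝ)^j ≤ R then ENNReal.ofReal ((2:ℝ)^((j:ℝ)*((d:ℝ)-γ))) else 0)
      = ∑ j ∈ Finset.range (J+1),
          (if (2:ℝ)^j ≤ R then ENNReal.ofReal ((2:ℝ)^((j:ℝ)*((d:ℝ)-γ))) else 0) :=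
        tsum_eq_sum hsupp
    _ ≤ ∑ j ∈ Finset.range (J+1), ENNReal.ofReal (x^j) := by
        apply Finset.sum_le_sum
        intro j _
        split
        · apply le_of_eq
          rw [rj_eq_pow γ j, ← ENNReal.ofReal_pow hx0.le]
        · exact zero_le
    _ = ENNReal.ofReal (∑ j ∈ Finset.range (J+1), x^j) := by
        rw [ENNReal.ofReal_sum_of_nonneg]
        intro j _
        positivity
    _ ≤ ENNReal.ofReal ((x * (x-1)⁻¹) * R^((d:ℝ)-γ)) := by
        apply ENNReal.ofReal_le_ofReal
        have hgeo : ∑ j ∈ Finset.range (J+1), x^j = (x^(J+1) - 1)/(x-1) :=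
          geom_sum_eq (ne_of_gt hx1) _
        have hxJ : x^J ≤ R^((d:ℝ)-γ) := by
          have he : x^J = ((2:ℝ)^J)^((d:ℝ)-γ) := by
            rw [← Real.rpow_natCast x J, hx, ← Real.rpow_mul (by norm_num),
              ← Real.rpow_natCast 2 J, ← Real.rpow_mul (by norm_num)]
            congr 1
            ring
          rw [he]
          exact Real.rpow_le_rpow (by positivity) hlow (by linarith)
        rw [hgeo, div_eq_mul_inv]
        calc (x^(J+1)-1) * (x-1)⁻¹ ≤ (x * R^((d:ℝ)-γ)) * (x-1)⁻¹ := by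
              apply mul_le_mul_of_nonneg_right _ (le_of_lt (inv_pos.mpr hx1'))
              have : x^(J+1) = x^J * x := by rw [pow_succ]
              nlinarith
          _ = x * (x-1)⁻¹ * R^((d:ℝ)-γ) := by ring
    _ = ENNReal.ofReal (x * (x-1)⁻¹) * ENNReal.ofReal (R^((d:ℝ)-γ)) :=
        ENNReal.ofReal_mul (by positivity)

lemma tail_est (γ : ℝ) (hγ : (d:ℝ) < γ) : ∃ K : ℝ≥0∞, K ≠ ⊤ ∧ ∀ R : ℝ, 0 < R →
    ∑' m : Fin d → ℤ, (if R < jb m then ENNReal.ofReal (jb m ^ (-γ)) else 0)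
      ≤ K * ENNReal.ofReal (R ^ ((d:ℝ)-γ)) := by
  obtain ⟨K, hK, hKle⟩ := jsum_tail (d := d) γ hγ
  refine ⟨ENNReal.ofReal ((2:ℝ)^(3*d) * (2:ℝ)^|γ|) * K,
    ENNReal.mul_ne_top ENNReal.ofReal_ne_top hK, ?_⟩
  intro R hR
  calc ∑' m : Fin d → ℤ, (if R < jb m then ENNReal.ofReal (jb m ^ (-γ)) else 0)
      ≤ ENNReal.ofReal ((2:ℝ)^(3*d) * (2:ℝ)^|γ|) *
        ∑' j : ℕ, (if R < (2:ℝ)^(j+1) then ENNReal.ofReal ((2:ℝ)^((j:ℝ)*((d:ℝ)-γ))) else 0) :=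
        region_le γ _ _ (fun m hm => lt_trans hm (jb_lt_pow_sh m))
    _ ≤ ENNReal.ofReal ((2:ℝ)^(3*d) * (2:ℝ)^|γ|) * (K * ENNReal.ofReal (R ^ ((d:ℝ)-γ))) :=
        mul_le_mul_right (hKle R hR) _
    _ = (ENNReal.ofReal ((2:ℝ)^(3*d) * (2:ℝ)^|γ|) * K) * ENNReal.ofReal (R ^ ((d:ℝ)-γ)) := by
        ring

lemma ball_est (γ : ℝ) (hγ : γ < (d:ℝ)) : ∃ K : ℝ≥0∞, K ≠ ⊤ ∧ ∀ R : ℝ, 1 ≤ R →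
    ∑' m : Fin d → ℤ, (if jb m ≤ R then ENNReal.ofReal (jb m ^ (-γ)) else 0)
      ≤ K * ENNReal.ofReal (R ^ ((d:ℝ)-γ)) := by
  obtain ⟨K, hK, hKle⟩ := jsum_ball (d := d) γ hγ
  refine ⟨ENNReal.ofReal ((2:ℝ)^(3*d) * (2:ℝ)^|γ|) * K,
    ENNReal.mul_ne_top ENNReal.ofReal_ne_top hK, ?_⟩
  intro R hR
  calc ∑' m : Fin d → ℤ, (if jb m ≤ R then ENNReal.ofReal (jb m ^ (-γ)) else 0)
      ≤ ENNReal.ofReal ((2:ℝ)^(3*d) * (2:ℝ)^|γ|) *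
        ∑' j : ℕ, (if (2:ℝ)^j ≤ R then ENNReal.ofReal ((2:ℝ)^((j:ℝ)*((d:ℝ)-γ))) else 0) :=
        region_le γ _ _ (fun m hm => le_trans (pow_sh_le m) hm)
    _ ≤ ENNReal.ofReal ((2:ℝ)^(3*d) * (2:ℝ)^|γ|) * (K * ENNReal.ofReal (R ^ ((d:ℝ)-γ))) :=
        mul_le_mul_right (hKle R hR) _
    _ = (ENNReal.ofReal ((2:ℝ)^(3*d) * (2:ℝ)^|γ|) * K) * ENNReal.ofReal (R ^ ((d:ℝ)-γ)) := by
        ring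

lemma eq_zero_of_jb_le_one {m : Fin d → ℤ} (h : jb m ≤ 1) : m = 0 := by
  have h2 : jb m ^ 2 ≤ 1 := by nlinarith [jb_nonneg m]
  rw [sq_jb] at h2
  have h3 : ∑ i, (m i : ℝ)^2 ≤ 0 := by linarith
  funext i
  have h4 : (m i : ℝ)^2 = 0 := by
    have h5 := Finset.single_le_sum (f := fun i => (m i : ℝ)^2) (fun j _ => sq_nonneg _)
      (Finset.mem_univ i)
    nlinarith [sq_nonneg ((m i : ℝ))]
  have : (m i : ℝ) = 0 := by nlinarith
  exact_mod_cast this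

lemma jb_zero : jb (0 : Fin d → ℤ) = 1 := by
  simp [jb]

lemma total_est (γ : ℝ) (hγ : (d:ℝ) < γ) : ∃ K : ℝ≥0∞, K ≠ ⊤ ∧
    ∑' m : Fin d → ℤ, ENNReal.ofReal (jb m ^ (-γ)) ≤ K := by
  obtain ⟨K, hK, hKle⟩ := tail_est (d := d) γ hγ
  refine ⟨K * ENNReal.ofReal ((1:ℝ) ^ ((d:ℝ)-γ)) + 1, by
    exact ENNReal.add_ne_top.mpr ⟨ENNReal.mul_ne_top hK ENNReal.ofReal_ne_top, ENNReal.one_ne_top⟩,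
    ?_⟩
  have hpt : ∀ m : Fin d → ℤ, ENNReal.ofReal (jb m ^ (-γ)) ≤
      (if (1:ℝ) < jb m then ENNReal.ofReal (jb m ^ (-γ)) else 0)
        + (if m = 0 then 1 else 0) := by
    intro m
    by_cases h : (1:ℝ) < jb m
    · rw [if_pos h]
      exact le_add_right (le_refl _)
    · push_neg at h
      have hm := eq_zero_of_jb_le_one h
      rw [if_neg (by simpa using h), if_pos hm, hm, jb_zero, Real.one_rpow,
        ENNReal.ofReal_one]
      exact le_add_left (le_refl _)
  calc ∑' m : Fin d → ℤ, ENNReal.ofReal (jb m ^ (-γ))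
      ≤ ∑' m : Fin d → ℤ, ((if (1:ℝ) < jb m then ENNReal.ofReal (jb m ^ (-γ)) else 0)
          + (if m = 0 then 1 else 0)) := ENNReal.tsum_le_tsum hpt
    _ = (∑' m : Fin d → ℤ, (if (1:ℝ) < jb m then ENNReal.ofReal (jb m ^ (-γ)) else 0))
        + ∑' m : Fin d → ℤ, (if m = 0 then (1:ℝ≥0∞) else 0) := ENNReal.tsum_add
    _ ≤ K * ENNReal.ofReal ((1:ℝ) ^ ((d:ℝ)-γ)) + 1 := by
        apply add_le_add (hKle 1 one_pos)
        exact le_of_eq (tsum_ite_eq (0 : Fin d → ℤ) (fun _ => (1:ℝ≥0∞)))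

lemma helper_low (a b c e : ℝ) (hb : 0 < b) (hc : 0 < c) (h : b/c ≤ a) (he : e ≤ 0) :
    a ^ e ≤ c^(-e) * b^e := by
  calc a^e ≤ (b/c)^e := Real.rpow_le_rpow_of_nonpos (by positivity) h he
    _ = c^(-e) * b^e := by
        rw [Real.div_rpow hb.le hc.le, div_eq_mul_inv, ← Real.rpow_neg hc.le]
        ring

lemma helper_sandwich (a b e : ℝ) (hb : 0 < b) (h1 : b/2 ≤ a) (h2 : a ≤ 3*b) :
    a^e ≤ 3^|e| * b^e := by
  have ha : 0 < a := lt_of_lt_of_le (by positivity) h1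
  rcases le_or_gt 0 e with he | he
  · calc a^e ≤ (3*b)^e := Real.rpow_le_rpow ha.le h2 he
      _ = 3^e * b^e := Real.mul_rpow (by norm_num) hb.le
      _ = 3^|e| * b^e := by rw [abs_of_nonneg he]
  · calc a^e ≤ 2^(-e) * b^e := helper_low a b 2 e hb two_pos h1 he.le
      _ ≤ 3^|e| * b^e := by
          rw [abs_of_neg he]
          have h3 : (2:ℝ)^(-e) ≤ 3^(-e) :=
            Real.rpow_le_rpow (by norm_num) (by norm_num) (by linarith)
          nlinarith [Real.rpow_pos_of_pos hb e]

lemma ball_flex (β lam : ℝ) (hβ : 0 < β) (hβd : (d:ℝ) - β ≤ lam) (hlam : 0 ≤ lam)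
    (hc : β = (d:ℝ) → 0 < lam) :
    ∃ K : ℝ≥0∞, K ≠ ⊤ ∧ ∀ R : ℝ, 1 ≤ R →
      ∑' m : Fin d → ℤ, (if jb m ≤ R then ENNReal.ofReal (jb m ^ (-β)) else 0)
        ≤ K * ENNReal.ofReal (R ^ lam) := by
  rcases lt_trichotomy β (d:ℝ) with hlt | heq | hgt
  · obtain ⟨K, hK, hKle⟩ := ball_est (d := d) β hlt
    refine ⟨K, hK, fun R hR => le_trans (hKle R hR) (mul_le_mul_right ?_ _)⟩
    exact ENNReal.ofReal_le_ofReal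
      (Real.rpow_le_rpow_of_exponent_le hR (by linarith))
  · have hlam' : 0 < lam := hc heq
    obtain ⟨K, hK, hKle⟩ := total_est (d := d) (β + lam) (by rw [heq] at *; linarith)
    refine ⟨K, hK, fun R hR => ?_⟩
    have hpt : ∀ m : Fin d → ℤ, (if jb m ≤ R then ENNReal.ofReal (jb m ^ (-β)) else 0)
        ≤ ENNReal.ofReal (R ^ lam) * ENNReal.ofReal (jb m ^ (-(β+lam))) := by
      intro m
      by_cases h : jb m ≤ R
      · rw [if_pos h, ← ENNReal.ofReal_mul (by positivity)]
        apply ENNReal.ofReal_le_ofReal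
        have hjb := jb_pos m
        have e1 : jb m ^ (-β) = jb m ^ lam * jb m ^ (-(β+lam)) := by
          rw [← Real.rpow_add hjb]
          congr 1
          ring
        rw [e1]
        apply mul_le_mul_of_nonneg_right _ (Real.rpow_nonneg hjb.le _)
        calc jb m ^ lam ≤ R ^ lam := Real.rpow_le_rpow hjb.le h hlam
          _ = R ^ lam := rfl
      · rw [if_neg h]
        exact zero_le
    calc ∑' m : Fin d → ℤ, (if jb m ≤ R then ENNReal.ofReal (jb m ^ (-β)) else 0)
        ≤ ∑' m : Fin d → ℤ, ENNReal.ofReal (R ^ lam) * ENNReal.ofReal (jb m ^ (-(β+lam))) :=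
          ENNReal.tsum_le_tsum hpt
      _ = ENNReal.ofReal (R ^ lam) * ∑' m : Fin d → ℤ, ENNReal.ofReal (jb m ^ (-(β+lam))) :=
          ENNReal.tsum_mul_left
      _ ≤ ENNReal.ofReal (R ^ lam) * K := mul_le_mul_right hKle _
      _ = K * ENNReal.ofReal (R ^ lam) := mul_comm _ _
  · obtain ⟨K, hK, hKle⟩ := total_est (d := d) β hgt
    refine ⟨K, hK, fun R hR => ?_⟩
    have h1 : ∑' m : Fin d → ℤ, (if jb m ≤ R then ENNReal.ofReal (jb m ^ (-β)) else 0)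
        ≤ ∑' m : Fin d → ℤ, ENNReal.ofReal (jb m ^ (-β)) := by
      apply ENNReal.tsum_le_tsum
      intro m
      split
      · exact le_refl _
      · exact zero_le
    have h2 : (1:ℝ≥0∞) ≤ ENNReal.ofReal (R ^ lam) := by
      rw [← ENNReal.ofReal_one]
      exact ENNReal.ofReal_le_ofReal (Real.one_le_rpow hR hlam)
    calc ∑' m : Fin d → ℤ, (if jb m ≤ R then ENNReal.ofReal (jb m ^ (-β)) else 0)
        ≤ K := le_trans h1 hKle
      _ = K * 1 := (mul_one K).symm
      _ ≤ K * ENNReal.ofReal (R ^ lam) := mul_le_mul_right h2 _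

lemma f_nonneg (α β : ℝ) (n m : Fin d → ℤ) : 0 ≤ jb m ^ (-α) * jb (n - m) ^ (-β) :=
  mul_nonneg (Real.rpow_nonneg (jb_nonneg _) _) (Real.rpow_nonneg (jb_nonneg _) _)

lemma master (α β lam : ℝ) (hαβ : (d:ℝ) < α + β) (hα : α < (d:ℝ))
    (hlam0 : 0 ≤ lam) (hlam1 : (d:ℝ) - β ≤ lam) (hc : β = (d:ℝ) → 0 < lam) :
    ∃ C : ℝ, 0 < C ∧ ∀ n : Fin d → ℤ,
      (∑' m : Fin d → ℤ, jb m ^ (-α) * jb (n - m) ^ (-β)) ≤ C * jb n ^ (-α + lam) := by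
  have hβ : 0 < β := by linarith
  obtain ⟨K1, hK1, hK1le⟩ := ball_est (d := d) α hα
  obtain ⟨K2, hK2, hK2le⟩ := ball_flex (d := d) β lam hβ hlam1 hlam0 hc
  obtain ⟨K3, hK3, hK3le⟩ := tail_est (d := d) (α+β) hαβ
  set K : ℝ≥0∞ := K1 * ENNReal.ofReal ((2:ℝ)^β) + K2 * ENNReal.ofReal ((3:ℝ)^|α|)
      + K3 * ENNReal.ofReal ((3:ℝ)^β * (2:ℝ)^(α+β-(d:ℝ))) with hKdef
  have hKtop : K ≠ ⊤ := by
    rw [hKdef]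
    exact ENNReal.add_ne_top.mpr ⟨ENNReal.add_ne_top.mpr
      ⟨ENNReal.mul_ne_top hK1 ENNReal.ofReal_ne_top,
       ENNReal.mul_ne_top hK2 ENNReal.ofReal_ne_top⟩,
      ENNReal.mul_ne_top hK3 ENNReal.ofReal_ne_top⟩
  have main : ∀ n : Fin d → ℤ,
      ∑' m : Fin d → ℤ, ENNReal.ofReal (jb m ^ (-α) * jb (n - m) ^ (-β))
        ≤ K * ENNReal.ofReal (jb n ^ (-α + lam)) := by
    intro n
    set N : ℝ := jb n with hN
    have hN1 : 1 ≤ N := one_le_jb n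
    have hN0 : 0 < N := by linarith
    set Y : ℝ≥0∞ := ENNReal.ofReal (N ^ (-α + lam)) with hY
    have htri1 : ∀ m : Fin d → ℤ, N ≤ jb m + jb (n - m) := by
      intro m
      have h := jb_triangle m (n - m)
      rw [show m + (n - m) = n by abel] at h
      exact h
    have htri2 : ∀ m : Fin d → ℤ, jb m ≤ N + jb (n - m) := by
      intro m
      have h := jb_triangle n (-(n - m))
      rw [show n + -(n - m) = m by abel, jb_neg] at h
      exact h
    set c1 : ℝ≥0∞ := ENNReal.ofReal ((2:ℝ)^β * N^(-β)) with hc1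
    set c2 : ℝ≥0∞ := ENNReal.ofReal ((3:ℝ)^|α| * N^(-α)) with hc2
    set c3 : ℝ≥0∞ := ENNReal.ofReal ((3:ℝ)^β) with hc3
    set G1 : (Fin d → ℤ) → ℝ≥0∞ :=
      fun m => c1 * (if jb m ≤ N then ENNReal.ofReal (jb m ^ (-α)) else 0) with hG1
    set G2 : (Fin d → ℤ) → ℝ≥0∞ :=
      fun m => c2 * (if jb (n - m) ≤ N then ENNReal.ofReal (jb (n - m) ^ (-β)) else 0) with hG2
    set G3 : (Fin d → ℤ) → ℝ≥0∞ :=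
      fun m => c3 * (if N/2 < jb m then ENNReal.ofReal (jb m ^ (-(α+β))) else 0) with hG3
    have hpt : ∀ m : Fin d → ℤ, ENNReal.ofReal (jb m ^ (-α) * jb (n - m) ^ (-β))
        ≤ G1 m + G2 m + G3 m := by
      intro m
      have ha : 0 < jb m := jb_pos m
      have hb : 0 < jb (n - m) := jb_pos (n - m)
      by_cases h1 : jb m ≤ N/2
      · have hbN : N/2 ≤ jb (n - m) := by have := htri1 m; linarith
        have hbb : jb (n - m) ^ (-β) ≤ 2^β * N^(-β) := by
          have h := helper_low (jb (n - m)) N 2 (-β) hN0 two_pos hbN (by linarith)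
          simpa [neg_neg] using h
        have hG : ENNReal.ofReal (jb m ^ (-α) * jb (n - m) ^ (-β)) ≤ G1 m := by
          calc ENNReal.ofReal (jb m ^ (-α) * jb (n - m) ^ (-β))
              ≤ ENNReal.ofReal ((2^β * N^(-β)) * jb m ^ (-α)) := by
                apply ENNReal.ofReal_le_ofReal
                have haa : 0 ≤ jb m ^ (-α) := Real.rpow_nonneg ha.le _
                nlinarith [Real.rpow_nonneg hb.le (-β)]
            _ = c1 * ENNReal.ofReal (jb m ^ (-α)) := by
                rw [hc1, ENNReal.ofReal_mul (by positivity)]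
            _ = G1 m := by
                rw [hG1]
                simp only [if_pos (le_trans h1 (by linarith : N/2 ≤ N))]
        exact le_trans hG (le_add_right (le_add_right (le_refl _)))
      · push_neg at h1
        by_cases h2 : jb (n - m) ≤ N/2
        · have haN : N/2 ≤ jb m := h1.le
          have haU : jb m ≤ 3*N := by have := htri2 m; linarith
          have haa : jb m ^ (-α) ≤ 3^|α| * N^(-α) := by
            have h := helper_sandwich (jb m) N (-α) hN0 haN haU
            rwa [abs_neg] at h
          have hG : ENNReal.ofReal (jb m ^ (-α) * jb (n - m) ^ (-β)) ≤ G2 m := by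
            calc ENNReal.ofReal (jb m ^ (-α) * jb (n - m) ^ (-β))
                ≤ ENNReal.ofReal ((3^|α| * N^(-α)) * jb (n - m) ^ (-β)) := by
                  apply ENNReal.ofReal_le_ofReal
                  exact mul_le_mul_of_nonneg_right haa (Real.rpow_nonneg hb.le _)
              _ = c2 * ENNReal.ofReal (jb (n - m) ^ (-β)) := by
                  rw [hc2, ENNReal.ofReal_mul (by positivity)]
              _ = G2 m := by
                  rw [hG2]
                  simp only [if_pos (le_trans h2 (by linarith : N/2 ≤ N))]
          exact le_trans hG (le_add_right (le_add_left (le_refl _)))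
        · push_neg at h2
          have hab : jb m / 3 ≤ jb (n - m) := by have := htri2 m; linarith
          have hbb : jb (n - m) ^ (-β) ≤ 3^β * jb m ^ (-β) := by
            have h := helper_low (jb (n - m)) (jb m) 3 (-β) ha (by norm_num) hab (by linarith)
            simpa [neg_neg] using h
          have hG : ENNReal.ofReal (jb m ^ (-α) * jb (n - m) ^ (-β)) ≤ G3 m := by
            calc ENNReal.ofReal (jb m ^ (-α) * jb (n - m) ^ (-β))
                ≤ ENNReal.ofReal ((3:ℝ)^β * jb m ^ (-(α+β))) := by
                  apply ENNReal.ofReal_le_ofReal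
                  have e1 : jb m ^ (-(α+β)) = jb m ^ (-α) * jb m ^ (-β) := by
                    rw [← Real.rpow_add ha]
                    congr 1
                    ring
                  calc jb m ^ (-α) * jb (n - m) ^ (-β)
                      ≤ jb m ^ (-α) * (3^β * jb m ^ (-β)) :=
                        mul_le_mul_of_nonneg_left hbb (Real.rpow_nonneg ha.le _)
                    _ = (3:ℝ)^β * jb m ^ (-(α+β)) := by rw [e1]; ring
              _ = c3 * ENNReal.ofReal (jb m ^ (-(α+β))) := by
                  rw [hc3, ENNReal.ofReal_mul (by positivity)]
              _ = G3 m := by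
                  rw [hG3]
                  simp only [if_pos h1]
          exact le_trans hG (le_add_left (le_refl _))
    have hexp : ∀ e : ℝ, e ≤ -α + lam → ENNReal.ofReal (N ^ e) ≤ Y := by
      intro e he
      rw [hY]
      exact ENNReal.ofReal_le_ofReal (Real.rpow_le_rpow_of_exponent_le hN1 he)
    have hp1 : ∑' m : Fin d → ℤ, G1 m ≤ (K1 * ENNReal.ofReal ((2:ℝ)^β)) * Y := by
      rw [hG1]
      rw [ENNReal.tsum_mul_left]
      calc c1 * ∑' m : Fin d → ℤ, (if jb m ≤ N then ENNReal.ofReal (jb m ^ (-α)) else 0)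
          ≤ c1 * (K1 * ENNReal.ofReal (N ^ ((d:ℝ)-α))) := mul_le_mul_right (hK1le N hN1) _
        _ = K1 * (c1 * ENNReal.ofReal (N ^ ((d:ℝ)-α))) := by ring
        _ ≤ K1 * (ENNReal.ofReal ((2:ℝ)^β) * Y) := by
            apply mul_le_mul_right
            rw [hc1, ← ENNReal.ofReal_mul (by positivity)]
            have e1 : (2:ℝ)^β * N^(-β) * N^((d:ℝ)-α) = (2:ℝ)^β * N^(-β + ((d:ℝ)-α)) := by
              rw [mul_assoc, ← Real.rpow_add hN0]
            rw [e1, ENNReal.ofReal_mul (by positivity)]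
            exact mul_le_mul_right (hexp _ (by linarith)) _
        _ = (K1 * ENNReal.ofReal ((2:ℝ)^β)) * Y := by ring
    have hp2 : ∑' m : Fin d → ℤ, G2 m ≤ (K2 * ENNReal.ofReal ((3:ℝ)^|α|)) * Y := by
      rw [hG2]
      rw [ENNReal.tsum_mul_left]
      have hre : ∑' m : Fin d → ℤ, (if jb (n - m) ≤ N then ENNReal.ofReal (jb (n - m) ^ (-β)) else 0)
          = ∑' k : Fin d → ℤ, (if jb k ≤ N then ENNReal.ofReal (jb k ^ (-β)) else 0) :=
        Equiv.tsum_eq (Equiv.subLeft n) (fun k => if jb k ≤ N then ENNReal.ofReal (jb k ^ (-β)) else 0)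
      calc c2 * ∑' m : Fin d → ℤ, (if jb (n - m) ≤ N then ENNReal.ofReal (jb (n - m) ^ (-β)) else 0)
          = c2 * ∑' k : Fin d → ℤ, (if jb k ≤ N then ENNReal.ofReal (jb k ^ (-β)) else 0) := by
            rw [hre]
        _ ≤ c2 * (K2 * ENNReal.ofReal (N ^ lam)) := mul_le_mul_right (hK2le N hN1) _
        _ = K2 * (c2 * ENNReal.ofReal (N ^ lam)) := by ring
        _ ≤ K2 * (ENNReal.ofReal ((3:ℝ)^|α|) * Y) := by
            apply mul_le_mul_right
            rw [hc2, ← ENNReal.ofReal_mul (by positivity)]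
            have e1 : (3:ℝ)^|α| * N^(-α) * N^lam = (3:ℝ)^|α| * N^(-α + lam) := by
              rw [mul_assoc, ← Real.rpow_add hN0]
            rw [e1, ENNReal.ofReal_mul (by positivity)]
        _ = (K2 * ENNReal.ofReal ((3:ℝ)^|α|)) * Y := by ring
    have hp3 : ∑' m : Fin d → ℤ, G3 m
        ≤ (K3 * ENNReal.ofReal ((3:ℝ)^β * (2:ℝ)^(α+β-(d:ℝ)))) * Y := by
      rw [hG3]
      rw [ENNReal.tsum_mul_left]
      calc c3 * ∑' m : Fin d → ℤ, (if N/2 < jb m then ENNReal.ofReal (jb m ^ (-(α+β))) else 0)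
          ≤ c3 * (K3 * ENNReal.ofReal ((N/2) ^ ((d:ℝ)-(α+β)))) :=
            mul_le_mul_right (hK3le (N/2) (by linarith)) _
        _ = K3 * (c3 * ENNReal.ofReal ((N/2) ^ ((d:ℝ)-(α+β)))) := by ring
        _ ≤ K3 * (ENNReal.ofReal ((3:ℝ)^β * (2:ℝ)^(α+β-(d:ℝ))) * Y) := by
            apply mul_le_mul_right
            rw [hc3, ← ENNReal.ofReal_mul (by positivity)]
            have e1 : (3:ℝ)^β * (N/2) ^ ((d:ℝ)-(α+β))
                = ((3:ℝ)^β * (2:ℝ)^(α+β-(d:ℝ))) * N^((d:ℝ)-(α+β)) := by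
              rw [Real.div_rpow hN0.le (by norm_num)]
              have e2 : ((2:ℝ) ^ ((d:ℝ)-(α+β)))⁻¹ = (2:ℝ)^(α+β-(d:ℝ)) := by
                rw [← Real.rpow_neg (by norm_num : (0:ℝ) ≤ 2)]
                congr 1
                ring
              field_simp
              rw [← e2]
              field_simp
            rw [e1, ENNReal.ofReal_mul (by positivity)]
            exact mul_le_mul_right (hexp _ (by linarith)) _
        _ = (K3 * ENNReal.ofReal ((3:ℝ)^β * (2:ℝ)^(α+β-(d:ℝ)))) * Y := by ring
    calc ∑' m : Fin d → ℤ, ENNReal.ofReal (jb m ^ (-α) * jb (n - m) ^ (-β))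
        ≤ ∑' m : Fin d → ℤ, (G1 m + G2 m + G3 m) := ENNReal.tsum_le_tsum hpt
      _ = (∑' m : Fin d → ℤ, G1 m) + (∑' m : Fin d → ℤ, G2 m) + (∑' m : Fin d → ℤ, G3 m) := by
          rw [ENNReal.tsum_add, ENNReal.tsum_add]
      _ ≤ (K1 * ENNReal.ofReal ((2:ℝ)^β)) * Y + (K2 * ENNReal.ofReal ((3:ℝ)^|α|)) * Y
          + (K3 * ENNReal.ofReal ((3:ℝ)^β * (2:ℝ)^(α+β-(d:ℝ)))) * Y :=
          add_le_add (add_le_add hp1 hp2) hp3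
      _ = K * Y := by rw [hKdef]; ring
  refine ⟨K.toReal + 1, by positivity, ?_⟩
  intro n
  have hmain := main n
  have hfin : (∑' m : Fin d → ℤ, ENNReal.ofReal (jb m ^ (-α) * jb (n - m) ^ (-β))) ≠ ⊤ :=
    ne_top_of_le_ne_top (ENNReal.mul_ne_top hKtop ENNReal.ofReal_ne_top) hmain
  have hsummable : Summable (fun m : Fin d → ℤ => jb m ^ (-α) * jb (n - m) ^ (-β)) := by
    refine Summable.congr (ENNReal.summable_toReal hfin) (fun m => ?_)
    exact ENNReal.toReal_ofReal (f_nonneg α β n m)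
  have heq : ENNReal.ofReal (∑' m : Fin d → ℤ, jb m ^ (-α) * jb (n - m) ^ (-β))
      = ∑' m : Fin d → ℤ, ENNReal.ofReal (jb m ^ (-α) * jb (n - m) ^ (-β)) :=
    ENNReal.ofReal_tsum_of_nonneg (fun m => f_nonneg α β n m) hsummable
  have hle : (∑' m : Fin d → ℤ, jb m ^ (-α) * jb (n - m) ^ (-β)) ≤ K.toReal * jb n ^ (-α + lam) := by
    have h1 : ENNReal.ofReal (∑' m : Fin d → ℤ, jb m ^ (-α) * jb (n - m) ^ (-β))
        ≤ K * ENNReal.ofReal (jb n ^ (-α + lam)) := heq ▸ hmain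
    have h2 := ENNReal.toReal_mono (ENNReal.mul_ne_top hKtop ENNReal.ofReal_ne_top) h1
    rwa [ENNReal.toReal_ofReal (tsum_nonneg (fun m => f_nonneg α β n m)),
      ENNReal.toReal_mul, ENNReal.toReal_ofReal (Real.rpow_nonneg (jb_nonneg n) _)] at h2
  calc (∑' m : Fin d → ℤ, jb m ^ (-α) * jb (n - m) ^ (-β))
      ≤ K.toReal * jb n ^ (-α + lam) := hle
    _ ≤ (K.toReal + 1) * jb n ^ (-α + lam) := by
        apply mul_le_mul_of_nonneg_right (by linarith) (Real.rpow_nonneg (jb_nonneg n) _)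

end JB

/-- Discrete convolution estimate (Lemma on discrete convolutions). -/
theorem stmt0 (d : ℕ) (hd : 1 ≤ d) (α β : ℝ)
    (hαβ : (d : ℝ) < α + β) (hα : α < (d : ℝ)) :
    (β ≠ (d : ℝ) → ∃ C : ℝ, 0 < C ∧ ∀ n : Fin d → ℤ,
      (∑' m : Fin d → ℤ, jb m ^ (-α) * jb (n - m) ^ (-β))
        ≤ C * jb n ^ (-α + max ((d : ℝ) - β) 0)) ∧
    (β = (d : ℝ) → ∀ ε : ℝ, 0 < ε → ∃ C : ℝ, 0 < C ∧ ∀ n : Fin d → ℤ,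
      (∑' m : Fin d → ℤ, jb m ^ (-α) * jb (n - m) ^ (-β))
        ≤ C * jb n ^ (-α + ε)) := by
  constructor
  · intro hne
    exact JB.master α β (max ((d:ℝ) - β) 0) hαβ hα (le_max_right _ _) (le_max_left _ _)
      (fun h => absurd h hne)
  · intro heq ε hε
    exact JB.master α β ε hαβ hα hε.le (by rw [heq]; simpa using hε.le) (fun _ => hε)
end

section
/- Let g₁, …, g_{2n} be (not necessarily distinct) jointly Gaussian real random variables with mean zero. Then E[g₁⋯g_{2n}] = Σ Π_{k=1}^n E[g_{i_k} g_{j_k}], where the sum is over all partitions of {1,…,2n} into disjoint pairs (i_k, j_k). -/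
open MeasureTheory ProbabilityTheory

/- The collection of partitions of `Fin (2n)` into disjoint pairs (perfect matchings),
encoded as finsets of two-element blocks covering the whole index set. -/
open Classical in
noncomputable def pairPartitions (n : ℕ) : Finset (Finset (Finset (Fin (2 * n)))) :=
  Finset.univ.filter fun P =>
    (∀ p ∈ P, p.card = 2) ∧ P.sup id = Finset.univ ∧
      (P : Set (Finset (Fin (2 * n)))).PairwiseDisjoint id

section WickAux

open Real
open scoped NNReal ENNReal

/-- odd double factorial: `odf n = 1 * 3 * 5 * ... * (2n-1)` -/
def odf : ℕ → ℕ
  | 0 => 0 + 1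
  | (k+1) => (2*k+1) * odf k

lemma odf_mul : ∀ n : ℕ, odf n * (2^n * n.factorial) = (2*n).factorial := by
  intro n
  induction n with
  | zero => simp [odf]
  | succ k ih =>
    have h2 : 2*(k+1) = (2*k+1)+1 := by ring
    rw [odf, h2, Nat.factorial_succ, Nat.factorial_succ]
    rw [show (2*k+1) = (2*k)+1 from rfl, Nat.factorial_succ]
    rw [← ih]; ring

lemma abs_pow_le_exp (x : ℝ) (k : ℕ) : |x|^k ≤ k.factorial * Real.exp |x| := by
  have h1 : |x|^k / k.factorial ≤ Real.exp |x| := by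
    have := Real.sum_le_exp_of_nonneg (abs_nonneg x) (k+1)
    refine le_trans ?_ this
    exact Finset.single_le_sum (f := fun i => |x|^i / i.factorial)
      (fun i _ => by positivity) (Finset.self_mem_range_succ k)
  have hk : (0:ℝ) < k.factorial := by positivity
  calc |x|^k = k.factorial * (|x|^k / k.factorial) := by field_simp
    _ ≤ k.factorial * Real.exp |x| := by
        exact mul_le_mul_of_nonneg_left h1 hk.le

lemma integrable_pow_mul_exp {b : ℝ} (hb : 0 < b) (k : ℕ) :
    Integrable (fun x : ℝ => x^k * Real.exp (-b*x^2)) := by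
  have hb2 : 0 < b/2 := half_pos hb
  refine Integrable.mono' (((integrable_exp_neg_mul_sq hb2).const_mul
    (k.factorial * Real.exp (1/(2*b))))) ?_ ?_
  · exact ((measurable_id.pow_const k).mul
      (((measurable_id.pow_const 2).const_mul (-b)).exp)).aestronglyMeasurable
  · refine Filter.Eventually.of_forall (fun x => ?_)
    have h0 : 2*b*|x| ≤ b*b*x^2 + 1 := by
      nlinarith [sq_nonneg (b*|x| - 1), sq_abs x]
    have h1 : |x| ≤ b/2 * x^2 + 1/(2*b) := by
      rw [show b/2*x^2 + 1/(2*b) = (b*b*x^2+1)/(2*b) by field_simp,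
        le_div_iff₀ (by positivity)]
      nlinarith [h0]
    have h2 : Real.exp |x| * Real.exp (-b*x^2) ≤
        Real.exp (1/(2*b)) * Real.exp (-(b/2)*x^2) := by
      rw [← Real.exp_add, ← Real.exp_add]
      exact Real.exp_le_exp.mpr (by nlinarith)
    have h3 : ‖x^k * Real.exp (-b*x^2)‖ = |x|^k * Real.exp (-b*x^2) := by
      rw [norm_mul, norm_pow, Real.norm_eq_abs, Real.norm_eq_abs,
        Real.abs_exp]
    rw [h3]
    calc |x|^k * Real.exp (-b*x^2)
        ≤ (k.factorial * Real.exp |x|) * Real.exp (-b*x^2) :=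
          mul_le_mul_of_nonneg_right (abs_pow_le_exp x k) (Real.exp_pos _).le
      _ = k.factorial * (Real.exp |x| * Real.exp (-b*x^2)) := by ring
      _ ≤ k.factorial * (Real.exp (1/(2*b)) * Real.exp (-(b/2)*x^2)) := by
          refine mul_le_mul_of_nonneg_left h2 (by positivity)
      _ = k.factorial * Real.exp (1/(2*b)) * Real.exp (-(b/2)*x^2) := by ring

lemma J_rec {b : ℝ} (hb : 0 < b) (k : ℕ) :
    ∫ x : ℝ, x^(k+2) * Real.exp (-b*x^2)
      = (k+1)/(2*b) * ∫ x : ℝ, x^k * Real.exp (-b*x^2) := by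
  have hu : ∀ x : ℝ, HasDerivAt (fun y : ℝ => y^(k+1)) ((k+1) * x^k) x := by
    intro x
    simpa using hasDerivAt_pow (k+1) x
  have hv : ∀ x : ℝ, HasDerivAt (fun y : ℝ => -(2*b)⁻¹ * Real.exp (-b*y^2))
      (x * Real.exp (-b*x^2)) x := by
    intro x
    have h1 : HasDerivAt (fun y : ℝ => -b*y^2) (-b*(2*x)) x := by
      simpa using ((hasDerivAt_pow 2 x).const_mul (-b))
    have h2 := (h1.exp).const_mul (-(2*b)⁻¹)
    convert h2 using 1
    · rfl
    · rfl
    field_simp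
  have key := integral_mul_deriv_eq_deriv_mul_of_integrable (fun x _ => hu x) (fun x _ => hv x) ?_ ?_ ?_
  · have e1 : ∀ x : ℝ, x^(k+1) * (x * Real.exp (-b*x^2)) = x^(k+2) * Real.exp (-b*x^2) := by
      intro x; ring
    have e2 : ∀ x : ℝ, ((k:ℝ)+1) * x^k * (-(2*b)⁻¹ * Real.exp (-b*x^2))
        = (-((k+1)/(2*b))) * (x^k * Real.exp (-b*x^2)) := by
      intro x; field_simp
    calc ∫ x : ℝ, x^(k+2) * Real.exp (-b*x^2)
        = ∫ x : ℝ, x^(k+1) * (x * Real.exp (-b*x^2)) := by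
          congr 1; funext x; rw [e1]
      _ = -∫ x : ℝ, ((k:ℝ)+1) * x^k * (-(2*b)⁻¹ * Real.exp (-b*x^2)) := key
      _ = -∫ x : ℝ, (-((k+1)/(2*b))) * (x^k * Real.exp (-b*x^2)) := by
          congr 1; congr 1; funext x; rw [e2]
      _ = (k+1)/(2*b) * ∫ x : ℝ, x^k * Real.exp (-b*x^2) := by
          rw [integral_const_mul]; ring
  · show Integrable ((fun y : ℝ => y^(k+1)) * fun x => x * Real.exp (-b*x^2))
    have : ((fun y : ℝ => y^(k+1)) * fun x => x * Real.exp (-b*x^2))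
        = fun x : ℝ => x^(k+2) * Real.exp (-b*x^2) := by
      funext x; simp only [Pi.mul_apply]; ring
    rw [this]
    exact integrable_pow_mul_exp hb (k+2)
  · show Integrable ((fun x : ℝ => ((k:ℝ)+1) * x^k) * fun x => -(2*b)⁻¹ * Real.exp (-b*x^2))
    have : ((fun x : ℝ => ((k:ℝ)+1) * x^k) * fun x => -(2*b)⁻¹ * Real.exp (-b*x^2))
        = fun x : ℝ => (((k:ℝ)+1) * (-(2*b)⁻¹)) * (x^k * Real.exp (-b*x^2)) := by
      funext x; simp [Pi.mul_apply]; ring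
    rw [this]
    exact (integrable_pow_mul_exp hb k).const_mul _
  · show Integrable ((fun y : ℝ => y^(k+1)) * fun x => -(2*b)⁻¹ * Real.exp (-b*x^2))
    have : ((fun y : ℝ => y^(k+1)) * fun x => -(2*b)⁻¹ * Real.exp (-b*x^2))
        = fun x : ℝ => (-(2*b)⁻¹) * (x^(k+1) * Real.exp (-b*x^2)) := by
      funext x; simp [Pi.mul_apply]; ring
    rw [this]
    exact (integrable_pow_mul_exp hb (k+1)).const_mul _



lemma gauss_density_eq (v : ℝ≥0) (hv : v ≠ 0) :
    gaussianReal 0 v = volume.withDensity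
      (fun x => ((gaussianPDFReal 0 v x).toNNReal : ℝ≥0∞)) := by
  rw [gaussianReal_of_var_ne_zero 0 hv]
  rfl

lemma gauss_pdf_form (v : ℝ≥0) (x : ℝ) :
    gaussianPDFReal 0 v x
      = (Real.sqrt (2 * π * v))⁻¹ * Real.exp (-(2*(v:ℝ))⁻¹ * x^2) := by
  rw [gaussianPDFReal, sub_zero]
  congr 1
  ring_nf

lemma gauss_integral_eq (v : ℝ≥0) (hv : v ≠ 0) (f : ℝ → ℝ) :
    ∫ x, f x ∂(gaussianReal 0 v)
      = ∫ x, gaussianPDFReal 0 v x * f x := by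
  rw [gauss_density_eq v hv,
    integral_withDensity_eq_integral_smul
      ((measurable_gaussianPDFReal 0 v).real_toNNReal) f]
  congr 1
  funext x
  rw [NNReal.smul_def, Real.coe_toNNReal _ (gaussianPDFReal_nonneg 0 v x), smul_eq_mul]

lemma gauss_integrable_iff (v : ℝ≥0) (hv : v ≠ 0) (f : ℝ → ℝ) :
    Integrable f (gaussianReal 0 v)
      ↔ Integrable (fun x => gaussianPDFReal 0 v x * f x) volume := by
  rw [gauss_density_eq v hv,
    integrable_withDensity_iff_integrable_smul
      ((measurable_gaussianPDFReal 0 v).real_toNNReal)]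
  constructor <;> intro h <;> refine h.congr (Filter.Eventually.of_forall fun x => ?_) <;>
    simp only [NNReal.smul_def, Real.coe_toNNReal _ (gaussianPDFReal_nonneg 0 v x), smul_eq_mul]

lemma gauss_integrable_pow (v : ℝ≥0) (k : ℕ) :
    Integrable (fun x : ℝ => x^k) (gaussianReal 0 v) := by
  by_cases hv : v = 0
  · rw [hv, gaussianReal_zero_var]
    refine (integrable_const ((0:ℝ)^k)).congr ?_
    rw [Filter.EventuallyEq, ae_dirac_eq]
    exact Filter.eventually_pure.mpr rfl
  · rw [gauss_integrable_iff v hv]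
    have hb : (0:ℝ) < (2*(v:ℝ))⁻¹ := by
      have : (0:ℝ) < v := by positivity
      positivity
    refine ((integrable_pow_mul_exp hb k).const_mul ((Real.sqrt (2 * π * v))⁻¹)).congr
      (Filter.Eventually.of_forall fun x => ?_)
    simp only [gauss_pdf_form]
    ring

lemma gauss_mom_rec (v : ℝ≥0) (k : ℕ) :
    ∫ x, x^(k+2) ∂(gaussianReal 0 v)
      = ((k:ℝ)+1) * v * ∫ x, x^k ∂(gaussianReal 0 v) := by
  by_cases hv : v = 0
  · rw [hv, gaussianReal_zero_var, integral_dirac]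
    norm_num
  · have hvpos : (0:ℝ) < v := by positivity
    have hb : (0:ℝ) < (2*(v:ℝ))⁻¹ := by positivity
    rw [gauss_integral_eq v hv, gauss_integral_eq v hv]
    have e : ∀ m : ℕ, (∫ x, gaussianPDFReal 0 v x * x^m)
        = (Real.sqrt (2 * π * v))⁻¹ * ∫ x, x^m * Real.exp (-(2*(v:ℝ))⁻¹ * x^2) := by
      intro m
      rw [← integral_const_mul]
      congr 1; funext x; simp only [gauss_pdf_form]; ring
    rw [e, e, J_rec hb k]
    have : ((k:ℝ)+1)/(2*(2*(v:ℝ))⁻¹) = ((k:ℝ)+1) * v := by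
      field_simp
    rw [this]
    ring

lemma gauss_even_mom (v : ℝ≥0) (k : ℕ) :
    ∫ x, x^(2*k) ∂(gaussianReal 0 v) = (odf k : ℝ) * (v:ℝ)^k := by
  induction k with
  | zero => simp [odf]
  | succ k ih =>
    have h2 : 2*(k+1) = (2*k)+2 := by ring
    rw [h2, gauss_mom_rec, ih, odf]
    push_cast
    ring

lemma gauss_integrable_abs_pow (v : ℝ≥0) (m : ℕ) :
    Integrable (fun x : ℝ => |x|^m) (gaussianReal 0 v) := by
  refine Integrable.mono' ((integrable_const (1:ℝ)).add (gauss_integrable_pow v (2*m)))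
    ((measurable_id.abs.pow_const m).aestronglyMeasurable)
    (Filter.Eventually.of_forall fun x => ?_)
  have hx : x^(2*m) = |x|^(2*m) := by
    rw [pow_mul, pow_mul, sq_abs]
  rw [Real.norm_eq_abs, abs_pow, abs_abs, Pi.add_apply, hx]
  rcases le_or_gt |x| 1 with h | h
  · have h1 : |x|^m ≤ 1 := pow_le_one₀ (abs_nonneg x) h
    nlinarith [pow_nonneg (abs_nonneg x) (2*m)]
  · have h1 : |x|^m ≤ |x|^(2*m) :=
      pow_le_pow_right₀ h.le (by omega)
    nlinarith


lemma bij_iff_fiber_card {α β : Type*} [Fintype α] [Fintype β] [DecidableEq β] (f : α → β) :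
    (∀ i, (Finset.univ.filter fun a => f a = i).card = 1) ↔ Function.Bijective f := by
  constructor
  · intro h
    constructor
    · intro a a' haa
      exact Finset.card_le_one.mp (le_of_eq (h (f a'))) a
        (by simp [haa]) a' (by simp)
    · intro i
      have h1 := h i
      have hpos : 0 < (Finset.univ.filter fun a => f a = i).card := by omega
      obtain ⟨a, ha⟩ := Finset.card_pos.mp hpos
      exact ⟨a, (Finset.mem_filter.mp ha).2⟩
  · intro hf i
    obtain ⟨a, ha⟩ := hf.surjective i
    rw [Finset.card_eq_one]
    refine ⟨a, ?_⟩
    ext x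
    simp only [Finset.mem_filter, Finset.mem_univ, true_and, Finset.mem_singleton]
    constructor
    · intro hx; exact hf.injective (hx.trans ha.symm)
    · rintro rfl; exact ha

noncomputable def allOnes (β : Type*) [Fintype β] : β →₀ ℕ :=
  Finsupp.equivFunOnFinite.symm 1

lemma allOnes_apply {β : Type*} [Fintype β] (i : β) : allOnes β i = 1 := rfl

lemma sum_single_iff {α β : Type*} [Fintype α] [Fintype β] [DecidableEq β] (f : α → β) :
    (∑ a : α, Finsupp.single (f a) (1:ℕ)) = allOnes β ↔ Function.Bijective f := by
  classical
  have happ : ∀ i, (∑ a : α, Finsupp.single (f a) (1:ℕ)) i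
      = (Finset.univ.filter fun a => f a = i).card := by
    intro i
    rw [Finsupp.finset_sum_apply]
    rw [Finset.sum_congr rfl (fun a _ => (Finsupp.single_apply :
      (Finsupp.single (f a) (1:ℕ)) i = if f a = i then 1 else 0))]
    rw [Finset.sum_boole]
    simp
  constructor
  · intro h
    rw [← bij_iff_fiber_card]
    intro i
    rw [← happ, h, allOnes_apply]
  · intro h
    ext i
    rw [happ, allOnes_apply]
    exact (bij_iff_fiber_card f).mpr h i

lemma prod_monomial {κ σ R : Type*} [CommSemiring R] (s : Finset κ)
    (d : κ → σ →₀ ℕ) (c : κ → R) :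
    ∏ k ∈ s, MvPolynomial.monomial (d k) (c k)
      = MvPolynomial.monomial (∑ k ∈ s, d k) (∏ k ∈ s, c k) := by
  classical
  induction s using Finset.induction_on with
  | empty => simp [MvPolynomial.monomial_zero']
  | insert x s hx ih =>
    rw [Finset.prod_insert hx, Finset.sum_insert hx, Finset.prod_insert hx, ih,
      MvPolynomial.monomial_mul]

lemma X_eq_monomial {σ R : Type*} [CommSemiring R] (i : σ) :
    (MvPolynomial.X i : MvPolynomial σ R)
      = MvPolynomial.monomial (Finsupp.single i 1) 1 := by
  have h := (MvPolynomial.X_pow_eq_monomial (n := i) (e := 1) (R := R))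
  rwa [pow_one] at h

lemma prod_X_eq {κ σ R : Type*} [CommSemiring R] (s : Finset κ) (f : κ → σ) :
    ∏ k ∈ s, (MvPolynomial.X (f k) : MvPolynomial σ R)
      = MvPolynomial.monomial (∑ k ∈ s, Finsupp.single (f k) 1) 1 := by
  rw [Finset.prod_congr rfl (fun k _ => X_eq_monomial (f k)), prod_monomial]
  rw [Finset.prod_const_one]

lemma card_filter_bijective (α : Type*) [Fintype α] [DecidableEq α] :
    (Finset.univ.filter fun f : α → α => Function.Bijective f).card
      = (Fintype.card α).factorial := by
  classical
  rw [← Fintype.card_perm (α := α), ← Finset.card_univ]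
  refine Finset.card_bij' (fun f hf => Equiv.ofBijective f (Finset.mem_filter.mp hf).2)
    (fun e _ => ⇑e) (fun f hf => Finset.mem_univ _)
    (fun e _ => Finset.mem_filter.mpr ⟨Finset.mem_univ _, e.bijective⟩)
    (fun f hf => rfl) (fun e _ => Equiv.ext fun x => rfl)


open Finset Function

lemma mem_pairPartitions {n : ℕ} {P : Finset (Finset (Fin (2 * n)))} :
    P ∈ pairPartitions n ↔
      (∀ p ∈ P, p.card = 2) ∧ P.sup id = Finset.univ ∧
        (P : Set (Finset (Fin (2 * n)))).PairwiseDisjoint id := by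
  simp [pairPartitions]

variable {n : ℕ}

/-- the pair partition associated to a bijection `Fin n × Bool ≃ Fin (2*n)` -/
noncomputable def blocks (χ : (Fin n × Bool) ≃ Fin (2 * n)) :
    Finset (Finset (Fin (2 * n))) :=
  Finset.image (fun k : Fin n => ({χ (k, false), χ (k, true)} : Finset (Fin (2*n)))) Finset.univ

lemma blocks_mem (χ : (Fin n × Bool) ≃ Fin (2 * n)) : blocks χ ∈ pairPartitions n := by
  rw [mem_pairPartitions]
  refine ⟨?_, ?_, ?_⟩
  · intro p hp
    obtain ⟨k, -, rfl⟩ := Finset.mem_image.mp hp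
    exact Finset.card_pair (fun h => by simpa using χ.injective h)
  · apply Finset.eq_univ_of_forall
    intro i
    rw [Finset.sup_eq_biUnion, Finset.mem_biUnion]
    refine ⟨{χ ((χ.symm i).1, false), χ ((χ.symm i).1, true)}, ?_, ?_⟩
    · exact Finset.mem_image_of_mem _ (Finset.mem_univ _)
    · rcases hb : (χ.symm i).2 with _ | _
      · have h : χ ((χ.symm i).1, false) = i := by
          conv_rhs => rw [← χ.apply_symm_apply i]
          congr 1
          rw [← hb]
        rw [← h]; simp
      · have h : χ ((χ.symm i).1, true) = i := by
          conv_rhs => rw [← χ.apply_symm_apply i]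
          congr 1
          rw [← hb]
        rw [← h]; simp
  · intro p hp q hq hne
    simp only [blocks, Finset.coe_image, Finset.coe_univ, Set.image_univ, Set.mem_range] at hp hq
    obtain ⟨k, rfl⟩ := hp
    obtain ⟨k', rfl⟩ := hq
    refine Finset.disjoint_left.mpr fun x hx hx' => hne ?_
    simp only [id, Finset.mem_insert, Finset.mem_singleton] at hx hx'
    have hk : k = k' := by
      rcases hx with h | h <;> rcases hx' with h' | h' <;>
        · have := χ.injective (h.symm.trans h')
          exact (Prod.mk.injEq _ _ _ _ ▸ this).1
    rw [hk]

lemma prod_blocks (χ : (Fin n × Bool) ≃ Fin (2 * n)) (A : Finset (Fin (2*n)) → ℝ) :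
    ∏ p ∈ blocks χ, A p = ∏ k : Fin n, A {χ (k, false), χ (k, true)} := by
  rw [blocks, Finset.prod_image]
  intro k _ k' _ h
  have h1 : χ (k, false) ∈ ({χ (k', false), χ (k', true)} : Finset (Fin (2*n))) := by
    simp only at h; rw [← h]; simp
  simp only [Finset.mem_insert, Finset.mem_singleton] at h1
  rcases h1 with h1 | h1 <;>
    · have := χ.injective h1
      exact (Prod.mk.injEq _ _ _ _ ▸ this).1

def boolXorEquiv (c : Bool) : Bool ≃ Bool where
  toFun b := xor c b
  invFun b := xor c b
  left_inv b := by cases c <;> cases b <;> rfl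
  right_inv b := by cases c <;> cases b <;> rfl

def twist (pe : Equiv.Perm (Fin n)) (ep : Fin n → Bool) : (Fin n × Bool) ≃ (Fin n × Bool) :=
  Equiv.prodShear pe (fun k => boolXorEquiv (ep k))

lemma twist_apply (pe : Equiv.Perm (Fin n)) (ep : Fin n → Bool) (k : Fin n) (b : Bool) :
    twist pe ep (k, b) = (pe k, xor (ep k) b) := rfl

lemma card_fiber (P : Finset (Finset (Fin (2*n)))) (hP : P ∈ pairPartitions n) :
    (Finset.univ.filter
        fun χ : (Fin n × Bool) ≃ Fin (2*n) => blocks χ = P).card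
      = 2^n * n.factorial := by
  classical
  obtain ⟨h2, hsup, hdisj⟩ := mem_pairPartitions.mp hP
  -- step 1 : P.card = n
  have hcardP : P.card = n := by
    have hb : P.biUnion id = Finset.univ := by
      rw [← Finset.sup_eq_biUnion]; exact hsup
    have hc := Finset.card_biUnion
      (fun p hp q hq hne => hdisj (Finset.mem_coe.mpr hp) (Finset.mem_coe.mpr hq) hne)
    rw [hb] at hc
    have hsum : ∑ u ∈ P, (id u).card = P.card * 2 := by
      simp only [id_eq]
      rw [Finset.sum_congr rfl h2, Finset.sum_const, smul_eq_mul]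
    rw [hsum] at hc
    simp only [Finset.card_univ, Fintype.card_fin] at hc
    omega
  -- step 2 : enumerate the blocks
  have hcard' : Fintype.card {p // p ∈ P} = n := by
    rw [Fintype.card_coe]; exact hcardP
  set e : Fin n ≃ {p // p ∈ P} := (Fintype.equivFinOfCardEq hcard').symm with he
  have hex : ∀ k : Fin n, ∃ x : Fin (2*n) × Fin (2*n), x.1 ≠ x.2 ∧
      ((e k : Finset (Fin (2*n)))) = {x.1, x.2} := by
    intro k
    obtain ⟨a, b, hab, hpr⟩ := Finset.card_eq_two.mp (h2 _ (e k).2)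
    exact ⟨(a, b), hab, hpr⟩
  choose t ht1 ht2 using hex
  -- step 4 : base point
  set χfun : Fin n × Bool → Fin (2*n) :=
    fun x => cond x.2 (t x.1).2 (t x.1).1 with hχfun
  have hm : ∀ k b, χfun (k, b) ∈ (e k : Finset (Fin (2*n))) := by
    intro k b
    rw [ht2]
    cases b
    · exact Finset.mem_insert_self _ _
    · exact Finset.mem_insert_of_mem (Finset.mem_singleton_self _)
  have hinj : Function.Injective χfun := by
    rintro ⟨k, b⟩ ⟨k', b'⟩ h
    have hkk : e k = e k' := by
      by_contra hne
      have hne' : (e k : Finset (Fin (2*n))) ≠ (e k' : Finset (Fin (2*n))) :=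
        fun hh => hne (Subtype.ext hh)
      have hd : Disjoint (e k : Finset (Fin (2*n))) (e k' : Finset (Fin (2*n))) :=
        hdisj (Finset.mem_coe.mpr (e k).2) (Finset.mem_coe.mpr (e k').2) hne'
      exact Finset.disjoint_left.mp hd (hm k b) (h ▸ hm k' b')
    have hk : k = k' := e.injective hkk
    subst hk
    have hbb : b = b' := by
      cases b <;> cases b'
      · rfl
      · exact absurd (show (t k).1 = (t k).2 from h) (ht1 k)
      · exact absurd (show (t k).1 = (t k).2 from h.symm) (ht1 k)
      · rfl
    rw [hbb]
  have hbij : Function.Bijective χfun := by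
    rw [Fintype.bijective_iff_injective_and_card]
    exact ⟨hinj, by simp [mul_comm]⟩
  set χ₀ : (Fin n × Bool) ≃ Fin (2*n) := Equiv.ofBijective χfun hbij with hχ₀
  have hblocks₀ : blocks χ₀ = P := by
    ext p
    rw [blocks, Finset.mem_image]
    constructor
    · rintro ⟨k, -, rfl⟩
      have h : ({χ₀ (k, false), χ₀ (k, true)} : Finset (Fin (2*n)))
          = (e k : Finset (Fin (2*n))) := by
        rw [ht2]; rfl
      rw [h]; exact (e k).2
    · intro hp
      refine ⟨e.symm ⟨p, hp⟩, Finset.mem_univ _, ?_⟩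
      have h : ({χ₀ (e.symm ⟨p, hp⟩, false), χ₀ (e.symm ⟨p, hp⟩, true)} : Finset (Fin (2*n)))
          = (e (e.symm ⟨p, hp⟩) : Finset (Fin (2*n))) := by
        rw [ht2]; rfl
      rw [h, e.apply_symm_apply]
  -- step 6 : the fiber is the image of the symmetry group
  set Gmap : Equiv.Perm (Fin n) × (Fin n → Bool) → ((Fin n × Bool) ≃ Fin (2*n)) :=
    fun z => (twist z.1 z.2).trans χ₀ with hG
  have hGinj : Function.Injective Gmap := by
    rintro ⟨pe, ep⟩ ⟨pe', ep'⟩ h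
    have htw : twist pe ep = twist pe' ep' := by
      have h' := congrArg (fun q => q.trans χ₀.symm) h
      simpa [hG, Equiv.trans_assoc] using h'
    have hcomp : ∀ k : Fin n, (pe k, ep k) = (pe' k, ep' k) := by
      intro k
      have h'' := congrArg (fun q => q (k, false)) htw
      simpa [twist_apply] using h''
    have hpe : pe = pe' := Equiv.ext fun k => congrArg Prod.fst (hcomp k)
    have hep : ep = ep' := funext fun k => congrArg Prod.snd (hcomp k)
    rw [Prod.mk.injEq]; exact ⟨hpe, hep⟩
  have himg : Finset.univ.filter
      (fun χ : (Fin n × Bool) ≃ Fin (2*n) => blocks χ = P)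
      = Finset.image Gmap Finset.univ := by
    ext χ
    simp only [Finset.mem_filter, Finset.mem_univ, true_and, Finset.mem_image]
    constructor
    · intro hbP
      set σ : (Fin n × Bool) ≃ (Fin n × Bool) := χ.trans χ₀.symm with hσdef
      have hσapp : ∀ x, σ x = χ₀.symm (χ x) := fun x => rfl
      have key : ∀ k : Fin n, (σ (k, true)).1 = (σ (k, false)).1 := by
        intro k
        have hBk : ({χ (k, false), χ (k, true)} : Finset (Fin (2*n))) ∈ blocks χ₀ := by
          rw [hblocks₀, ← hbP, blocks]
          exact Finset.mem_image_of_mem _ (Finset.mem_univ k)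
        rw [blocks, Finset.mem_image] at hBk
        obtain ⟨j, -, hj⟩ := hBk
        have hff : χ (k, false) ∈ ({χ₀ (j, false), χ₀ (j, true)} : Finset (Fin (2*n))) := by
          rw [hj]; exact Finset.mem_insert_self _ _
        have htt : χ (k, true) ∈ ({χ₀ (j, false), χ₀ (j, true)} : Finset (Fin (2*n))) := by
          rw [hj]; exact Finset.mem_insert_of_mem (Finset.mem_singleton_self _)
        have h1 : (σ (k, false)).1 = j := by
          simp only [Finset.mem_insert, Finset.mem_singleton] at hff
          rcases hff with h | h <;> rw [hσapp, h, Equiv.symm_apply_apply]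
        have h2 : (σ (k, true)).1 = j := by
          simp only [Finset.mem_insert, Finset.mem_singleton] at htt
          rcases htt with h | h <;> rw [hσapp, h, Equiv.symm_apply_apply]
        rw [h1, h2]
      have hπinj : Function.Injective (fun k => (σ (k, false)).1) := by
        intro k k' hkk
        simp only at hkk
        have hne1 : σ (k, false) ≠ σ (k, true) := fun h => by simpa using σ.injective h
        have hx2 : (σ (k, false)).2 ≠ (σ (k, true)).2 :=
          fun h => hne1 (Prod.ext_iff.mpr ⟨(key k).symm, h⟩)
        have hz : σ (k', false) = σ (k, false) ∨ σ (k', false) = σ (k, true) := by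
          have e1 : (σ (k', false)).1 = (σ (k, false)).1 := hkk.symm
          have e2 : (σ (k, true)).1 = (σ (k, false)).1 := key k
          rcases Bool.eq_false_or_eq_true (σ (k', false)).2 with hz2 | hz2 <;>
          rcases Bool.eq_false_or_eq_true (σ (k, false)).2 with hx2' | hx2' <;>
          rcases Bool.eq_false_or_eq_true (σ (k, true)).2 with hy2 | hy2 <;>
            first
              | (exact absurd (hx2'.trans hy2.symm) hx2)
              | (exact Or.inl (Prod.ext_iff.mpr ⟨e1, hz2.trans hx2'.symm⟩))
              | (exact Or.inr (Prod.ext_iff.mpr ⟨e1.trans e2.symm, hz2.trans hy2.symm⟩))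
        rcases hz with h | h
        · exact (congrArg Prod.fst (σ.injective h) : k' = k).symm
        · have := congrArg Prod.snd (σ.injective h)
          simp at this
      have hpbij : Function.Bijective (fun k => (σ (k, false)).1) :=
        Finite.injective_iff_bijective.mp hπinj
      refine ⟨(Equiv.ofBijective _ hpbij, fun k => (σ (k, false)).2), ?_⟩
      have hσ2 : ∀ x, σ x = twist (Equiv.ofBijective _ hpbij) (fun k => (σ (k, false)).2) x := by
        rintro ⟨k, b⟩
        rw [twist_apply]
        cases b
        · refine Prod.ext_iff.mpr ⟨rfl, ?_⟩
          cases hv : (σ (k, false)).2 <;> rfl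
        · refine Prod.ext_iff.mpr ⟨key k, ?_⟩
          have hne1 : σ (k, false) ≠ σ (k, true) := fun h => by simpa using σ.injective h
          have hx2 : (σ (k, false)).2 ≠ (σ (k, true)).2 :=
            fun h => hne1 (Prod.ext_iff.mpr ⟨(key k).symm, h⟩)
          cases hv : (σ (k, true)).2 <;> cases hv' : (σ (k, false)).2 <;>
            simp_all
      apply Equiv.ext
      intro x
      show χ₀ (twist _ _ x) = χ x
      rw [← hσ2 x, hσapp, Equiv.apply_symm_apply]
    · rintro ⟨⟨pe, ep⟩, rfl⟩
      have hblk : ∀ k : Fin n,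
          ({Gmap (pe, ep) (k, false), Gmap (pe, ep) (k, true)} : Finset (Fin (2*n)))
            = {χ₀ (pe k, false), χ₀ (pe k, true)} := by
        intro k
        have hf : Gmap (pe, ep) (k, false) = χ₀ (pe k, ep k) := by
          show χ₀ (twist pe ep (k, false)) = _
          rw [twist_apply]
          cases hv : ep k <;> rfl
        have ht' : Gmap (pe, ep) (k, true) = χ₀ (pe k, !(ep k)) := by
          show χ₀ (twist pe ep (k, true)) = _
          rw [twist_apply]
          cases hv : ep k <;> rfl
        rw [hf, ht']
        cases hv : ep k
        · rfl
        · show ({χ₀ (pe k, true), χ₀ (pe k, false)} : Finset (Fin (2*n))) = _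
          rw [Finset.pair_comm]
      rw [blocks]
      rw [Finset.image_congr (fun k _ => hblk k)]
      rw [← hblocks₀, blocks]
      have himg2 : Finset.image
          (fun k : Fin n => ({χ₀ (pe k, false), χ₀ (pe k, true)} : Finset (Fin (2*n))))
          Finset.univ
          = Finset.image
            ((fun m : Fin n => ({χ₀ (m, false), χ₀ (m, true)} : Finset (Fin (2*n)))) ∘ pe)
            Finset.univ := rfl
      rw [himg2, ← Finset.image_image]
      congr 1
      apply Finset.eq_univ_of_forall
      intro m
      rw [Finset.mem_image]
      exact ⟨pe.symm m, Finset.mem_univ _, pe.apply_symm_apply m⟩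
  rw [himg, Finset.card_image_of_injective _ hGinj, Finset.card_univ,
    Fintype.card_prod, Fintype.card_perm, Fintype.card_fun]
  simp [mul_comm]


end WickAux

open Real
open scoped NNReal ENNReal
open Finset Function in
/-- Wick's theorem: for jointly Gaussian mean-zero random variables `g₁, …, g_{2n}`,
`E[g₁⋯g_{2n}] = Σ_{pair partitions} Π_{pairs {i,j}} E[g_i g_j]`. -/
theorem stmt4 {Ω : Type*} [MeasurableSpace Ω] (μ : Measure Ω) [IsProbabilityMeasure μ]
    (n : ℕ) (g : Fin (2 * n) → Ω → ℝ)
    (hmeas : ∀ i, Measurable (g i))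
    (hgauss : ∀ c : Fin (2 * n) → ℝ, ∃ v : NNReal,
      Measure.map (fun ω => ∑ i, c i * g i ω) μ = gaussianReal 0 v) :
    (∫ ω, ∏ i, g i ω ∂μ)
      = ∑ P ∈ pairPartitions n, ∏ p ∈ P, ∫ ω, ∏ i ∈ p, g i ω ∂μ := by
  classical
  have hSmeas : ∀ c : Fin (2*n) → ℝ, Measurable (fun ω => ∑ i, c i * g i ω) :=
    fun c => Finset.measurable_sum _ (fun i _ => (hmeas i).const_mul (c i))
  have hmap : ∀ i, ∃ v : ℝ≥0, Measure.map (g i) μ = gaussianReal 0 v := by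
    intro i
    obtain ⟨v, hv⟩ := hgauss (fun j => if j = i then 1 else 0)
    have he : (fun ω => ∑ j, (if j = i then (1:ℝ) else 0) * g j ω) = g i := by
      funext ω
      rw [Finset.sum_eq_single i]
      · simp
      · intro j _ hji; simp [hji]
      · intro h; exact absurd (Finset.mem_univ i) h
    rw [he] at hv
    exact ⟨v, hv⟩
  have hint_abs : ∀ i (m : ℕ), Integrable (fun ω => |g i ω|^m) μ := by
    intro i m
    obtain ⟨v, hv⟩ := hmap i
    have h1 : Integrable ((fun x : ℝ => |x|^m) ∘ (g i)) μ := by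
      rw [← integrable_map_measure ?_ (hmeas i).aemeasurable]
      · rw [hv]; exact gauss_integrable_abs_pow v m
      · rw [hv]; exact ((measurable_id.abs.pow_const m)).aestronglyMeasurable
    exact h1
  have hint_prod : ∀ (s : Finset (Fin (2*n))) (ψ : Fin (2*n) → Fin (2*n)),
      Integrable (fun ω => ∏ k ∈ s, g (ψ k) ω) μ := by
    intro s ψ
    rcases Finset.eq_empty_or_nonempty s with rfl | hs
    · simp only [Finset.prod_empty]; exact integrable_const 1
    · refine Integrable.mono'
        (integrable_finset_sum s (fun k _ => hint_abs (ψ k) s.card)) ?_ ?_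
      · exact (Finset.measurable_prod s (fun k _ => hmeas (ψ k))).aestronglyMeasurable
      · refine Filter.Eventually.of_forall fun ω => ?_
        rw [Real.norm_eq_abs, Finset.abs_prod]
        obtain ⟨k₀, hk₀, hmax⟩ := Finset.exists_max_image s (fun k => |g (ψ k) ω|) hs
        calc ∏ k ∈ s, |g (ψ k) ω| ≤ ∏ _k ∈ s, |g (ψ k₀) ω| :=
              Finset.prod_le_prod (fun k _ => abs_nonneg _) (fun k hk => hmax k hk)
          _ = |g (ψ k₀) ω| ^ s.card := Finset.prod_const _
          _ ≤ ∑ k ∈ s, |g (ψ k) ω| ^ s.card :=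
              Finset.single_le_sum (f := fun k => |g (ψ k) ω| ^ s.card)
                (fun k _ => pow_nonneg (abs_nonneg _) _) hk₀
  have hint2 : ∀ i j, Integrable (fun ω => g i ω * g j ω) μ := by
    intro i j
    refine Integrable.mono' ((hint_abs i 2).add (hint_abs j 2))
      ((hmeas i).mul (hmeas j)).aestronglyMeasurable
      (Filter.Eventually.of_forall fun ω => ?_)
    rw [Real.norm_eq_abs, abs_mul]
    simp only [Pi.add_apply]
    have h1 : (0:ℝ) ≤ |g i ω| := abs_nonneg _
    have h2 : (0:ℝ) ≤ |g j ω| := abs_nonneg _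
    nlinarith [sq_nonneg (|g i ω| - |g j ω|)]
  set a : Fin (2*n) → Fin (2*n) → ℝ := fun i j => ∫ ω, g i ω * g j ω ∂μ with ha
  set A : Finset (Fin (2*n)) → ℝ := fun p => ∫ ω, ∏ i ∈ p, g i ω ∂μ with hA
  set M : (Fin (2*n) → Fin (2*n)) → ℝ := fun φ => ∫ ω, ∏ k, g (φ k) ω ∂μ with hM
  have hvar : ∀ c : Fin (2*n) → ℝ, ∀ v : ℝ≥0,
      Measure.map (fun ω => ∑ i, c i * g i ω) μ = gaussianReal 0 v →
      (v : ℝ) = ∑ i, ∑ j, a i j * (c i * c j) := by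
    intro c v hv
    have h2 : ∫ x, x^2 ∂(gaussianReal 0 v) = (v:ℝ) := by
      have h := gauss_even_mom v 1
      norm_num [odf] at h
      convert h using 2
    have h3 : ∫ x, x^2 ∂(gaussianReal 0 v) = ∫ ω, (∑ i, c i * g i ω)^2 ∂μ := by
      rw [← hv]
      exact integral_map (hSmeas c).aemeasurable
        ((measurable_id.pow_const 2).aestronglyMeasurable)
    have h4 : ∫ ω, (∑ i, c i * g i ω)^2 ∂μ = ∑ i, ∑ j, a i j * (c i * c j) := by
      have e1 : ∀ ω, (∑ i, c i * g i ω)^2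
          = ∑ i, ∑ j, (c i * c j) * (g i ω * g j ω) := by
        intro ω
        rw [sq, Finset.sum_mul_sum]
        exact Finset.sum_congr rfl fun i _ => Finset.sum_congr rfl fun j _ => by ring
      calc ∫ ω, (∑ i, c i * g i ω)^2 ∂μ
          = ∫ ω, ∑ i, ∑ j, (c i * c j) * (g i ω * g j ω) ∂μ := by
            congr 1; funext ω; exact e1 ω
        _ = ∑ i, ∑ j, a i j * (c i * c j) := by
            rw [integral_finset_sum _ (fun i _ =>
              integrable_finset_sum _ (fun j _ => (hint2 i j).const_mul _))]
            refine Finset.sum_congr rfl fun i _ => ?_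
            rw [integral_finset_sum _ (fun j _ => (hint2 i j).const_mul _)]
            refine Finset.sum_congr rfl fun j _ => ?_
            rw [integral_const_mul]
            ring
    calc (v:ℝ) = ∫ x, x^2 ∂(gaussianReal 0 v) := h2.symm
      _ = ∫ ω, (∑ i, c i * g i ω)^2 ∂μ := h3
      _ = ∑ i, ∑ j, a i j * (c i * c j) := h4
  have hkey : ∀ c : Fin (2*n) → ℝ,
      ∑ φ : Fin (2*n) → Fin (2*n), (M φ) * ∏ k, c (φ k)
        = (odf n : ℝ) * (∑ i, ∑ j, a i j * (c i * c j))^n := by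
    intro c
    obtain ⟨v, hv⟩ := hgauss c
    have hS2n : ∫ ω, (∑ i, c i * g i ω)^(2*n) ∂μ = (odf n : ℝ) * (v:ℝ)^n := by
      calc ∫ ω, (∑ i, c i * g i ω)^(2*n) ∂μ
          = ∫ x, x^(2*n) ∂(Measure.map (fun ω => ∑ i, c i * g i ω) μ) :=
            (integral_map (hSmeas c).aemeasurable
              ((measurable_id.pow_const (2*n)).aestronglyMeasurable)).symm
        _ = (odf n : ℝ) * (v:ℝ)^n := by rw [hv]; exact gauss_even_mom v n
    have hexp : ∫ ω, (∑ i, c i * g i ω)^(2*n) ∂μ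
        = ∑ φ : Fin (2*n) → Fin (2*n), (M φ) * ∏ k, c (φ k) := by
      have e1 : ∀ ω, (∑ i, c i * g i ω)^(2*n)
          = ∑ φ : Fin (2*n) → Fin (2*n), (∏ k, c (φ k)) * ∏ k, g (φ k) ω := by
        intro ω
        calc (∑ i, c i * g i ω)^(2*n)
            = ∏ _k : Fin (2*n), (∑ i, c i * g i ω) := by
              rw [Finset.prod_const, Finset.card_univ, Fintype.card_fin]
          _ = ∑ φ ∈ Fintype.piFinset (fun _ : Fin (2*n) => (Finset.univ : Finset (Fin (2*n)))),
                ∏ k, (c (φ k) * g (φ k) ω) := Finset.prod_univ_sum _ _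
          _ = ∑ φ : Fin (2*n) → Fin (2*n), ∏ k, (c (φ k) * g (φ k) ω) := by
              rw [Fintype.piFinset_univ]
          _ = ∑ φ : Fin (2*n) → Fin (2*n), (∏ k, c (φ k)) * ∏ k, g (φ k) ω :=
              Finset.sum_congr rfl fun φ _ => Finset.prod_mul_distrib
      calc ∫ ω, (∑ i, c i * g i ω)^(2*n) ∂μ
          = ∫ ω, ∑ φ : Fin (2*n) → Fin (2*n), (∏ k, c (φ k)) * ∏ k, g (φ k) ω ∂μ := by
            congr 1; funext ω; exact e1 ω
        _ = ∑ φ : Fin (2*n) → Fin (2*n), ∫ ω, (∏ k, c (φ k)) * ∏ k, g (φ k) ω ∂μ :=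
            integral_finset_sum _ (fun φ _ => ((hint_prod Finset.univ φ).const_mul _))
        _ = ∑ φ : Fin (2*n) → Fin (2*n), (M φ) * ∏ k, c (φ k) := by
            refine Finset.sum_congr rfl fun φ _ => ?_
            rw [integral_const_mul]
            ring
    rw [← hexp, hS2n, hvar c v hv]
  -- the two polynomials
  set P₁ : MvPolynomial (Fin (2*n)) ℝ :=
    ∑ φ : Fin (2*n) → Fin (2*n), MvPolynomial.C (M φ) * ∏ k, MvPolynomial.X (φ k) with hP₁
  set Q₁ : MvPolynomial (Fin (2*n)) ℝ :=
    MvPolynomial.C (odf n : ℝ) *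
      (∑ i, ∑ j, MvPolynomial.C (a i j) * (MvPolynomial.X i * MvPolynomial.X j))^n with hQ₁
  have hPQ : P₁ = Q₁ := by
    apply MvPolynomial.funext
    intro c
    rw [hP₁, hQ₁]
    simp only [map_sum, map_mul, map_prod, map_pow, MvPolynomial.eval_C, MvPolynomial.eval_X]
    exact hkey c
  have hcoeffP : MvPolynomial.coeff (allOnes (Fin (2*n))) P₁
      = ((2*n).factorial : ℝ) * (∫ ω, ∏ i, g i ω ∂μ) := by
    rw [hP₁, MvPolynomial.coeff_sum]
    have e1 : ∀ φ : Fin (2*n) → Fin (2*n),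
        MvPolynomial.coeff (allOnes (Fin (2*n)))
          (MvPolynomial.C (M φ) * ∏ k, MvPolynomial.X (φ k))
        = if (∑ k, Finsupp.single (φ k) 1) = allOnes (Fin (2*n)) then M φ else 0 := by
      intro φ
      rw [MvPolynomial.coeff_C_mul, prod_X_eq, MvPolynomial.coeff_monomial]
      split <;> simp
    rw [Finset.sum_congr rfl (fun φ _ => e1 φ), ← Finset.sum_filter]
    have hfil : Finset.univ.filter
        (fun φ : Fin (2*n) → Fin (2*n) =>
          (∑ k, Finsupp.single (φ k) 1) = allOnes (Fin (2*n)))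
        = Finset.univ.filter (fun φ => Function.Bijective φ) := by
      apply Finset.filter_congr
      intro φ _
      exact sum_single_iff φ
    rw [hfil]
    have e2 : ∀ φ ∈ Finset.univ.filter
        (fun φ : Fin (2*n) → Fin (2*n) => Function.Bijective φ),
        M φ = ∫ ω, ∏ i, g i ω ∂μ := by
      intro φ hφ
      have hbij := (Finset.mem_filter.mp hφ).2
      have he : (fun ω => ∏ k, g (φ k) ω) = fun ω => ∏ i, g i ω :=
        funext fun ω => hbij.prod_comp fun i => g i ω
      show (∫ ω, ∏ k, g (φ k) ω ∂μ) = ∫ ω, ∏ i, g i ω ∂μ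
      rw [he]
    rw [Finset.sum_congr rfl e2, Finset.sum_const, card_filter_bijective, Fintype.card_fin,
      nsmul_eq_mul]
  have hcoeffQ : MvPolynomial.coeff (allOnes (Fin (2*n))) Q₁
      = (odf n : ℝ) * (((2^n * n.factorial : ℕ) : ℝ)
          * ∑ P ∈ pairPartitions n, ∏ p ∈ P, A p) := by
    rw [hQ₁, MvPolynomial.coeff_C_mul]
    congr 1
    -- rewrite the inner double sum as a sum over pairs of monomials
    have hB : (∑ i, ∑ j, MvPolynomial.C (a i j) *
          (MvPolynomial.X i * MvPolynomial.X j) : MvPolynomial (Fin (2*n)) ℝ)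
        = ∑ z : (Fin (2*n)) × (Fin (2*n)),
            MvPolynomial.monomial (Finsupp.single z.1 1 + Finsupp.single z.2 1) (a z.1 z.2) := by
      rw [Fintype.sum_prod_type]
      refine Finset.sum_congr rfl fun i _ => Finset.sum_congr rfl fun j _ => ?_
      rw [X_eq_monomial, X_eq_monomial, MvPolynomial.monomial_mul,
        MvPolynomial.C_mul_monomial]
      norm_num
    have hBn : ((∑ i, ∑ j, MvPolynomial.C (a i j) *
          (MvPolynomial.X i * MvPolynomial.X j) : MvPolynomial (Fin (2*n)) ℝ))^n
        = ∑ ψ : Fin n → (Fin (2*n)) × (Fin (2*n)),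
            MvPolynomial.monomial
              (∑ k, (Finsupp.single (ψ k).1 1 + Finsupp.single (ψ k).2 1))
              (∏ k, a (ψ k).1 (ψ k).2) := by
      rw [hB]
      calc (∑ z : (Fin (2*n)) × (Fin (2*n)),
            MvPolynomial.monomial (Finsupp.single z.1 1 + Finsupp.single z.2 1) (a z.1 z.2))^n
          = ∏ _k : Fin n, ∑ z : (Fin (2*n)) × (Fin (2*n)),
              MvPolynomial.monomial (Finsupp.single z.1 1 + Finsupp.single z.2 1) (a z.1 z.2) := by
            rw [Finset.prod_const, Finset.card_univ, Fintype.card_fin]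
        _ = ∑ ψ ∈ Fintype.piFinset
              (fun _ : Fin n => (Finset.univ : Finset ((Fin (2*n)) × (Fin (2*n))))),
              ∏ k, MvPolynomial.monomial
                (Finsupp.single (ψ k).1 1 + Finsupp.single (ψ k).2 1) (a (ψ k).1 (ψ k).2) :=
            Finset.prod_univ_sum _ _
        _ = ∑ ψ : Fin n → (Fin (2*n)) × (Fin (2*n)),
              ∏ k, MvPolynomial.monomial
                (Finsupp.single (ψ k).1 1 + Finsupp.single (ψ k).2 1) (a (ψ k).1 (ψ k).2) := by
            rw [Fintype.piFinset_univ]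
        _ = ∑ ψ : Fin n → (Fin (2*n)) × (Fin (2*n)),
              MvPolynomial.monomial
                (∑ k, (Finsupp.single (ψ k).1 1 + Finsupp.single (ψ k).2 1))
                (∏ k, a (ψ k).1 (ψ k).2) :=
            Finset.sum_congr rfl fun ψ _ => prod_monomial _ _ _
    rw [hBn, MvPolynomial.coeff_sum]
    have e1 : ∀ ψ : Fin n → (Fin (2*n)) × (Fin (2*n)),
        MvPolynomial.coeff (allOnes (Fin (2*n)))
          (MvPolynomial.monomial
            (∑ k, (Finsupp.single (ψ k).1 1 + Finsupp.single (ψ k).2 1))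
            (∏ k, a (ψ k).1 (ψ k).2))
        = if (∑ k, (Finsupp.single (ψ k).1 1 + Finsupp.single (ψ k).2 1))
            = allOnes (Fin (2*n)) then ∏ k, a (ψ k).1 (ψ k).2 else 0 := by
      intro ψ
      rw [MvPolynomial.coeff_monomial]
    rw [Finset.sum_congr rfl (fun ψ _ => e1 ψ), ← Finset.sum_filter]
    -- the validity condition means the combined map is bijective
    have hcond : ∀ ψ : Fin n → (Fin (2*n)) × (Fin (2*n)),
        ((∑ k, (Finsupp.single (ψ k).1 1 + Finsupp.single (ψ k).2 1))
            = allOnes (Fin (2*n)))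
          ↔ Function.Bijective
              (fun x : Fin n × Bool => _root_.cond x.2 (ψ x.1).2 (ψ x.1).1) := by
      intro ψ
      have hs : (∑ k, (Finsupp.single (ψ k).1 1 + Finsupp.single (ψ k).2 1))
          = ∑ x : Fin n × Bool,
              Finsupp.single ((fun x : Fin n × Bool => _root_.cond x.2 (ψ x.1).2 (ψ x.1).1) x) (1:ℕ) := by
        rw [Fintype.sum_prod_type]
        refine Finset.sum_congr rfl fun k _ => ?_
        rw [Fintype.sum_bool]
        exact (add_comm _ _)
      rw [hs]
      exact sum_single_iff _
    have hfil2 : Finset.univ.filter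
        (fun ψ : Fin n → (Fin (2*n)) × (Fin (2*n)) =>
          (∑ k, (Finsupp.single (ψ k).1 1 + Finsupp.single (ψ k).2 1))
            = allOnes (Fin (2*n)))
        = Finset.univ.filter
          (fun ψ => Function.Bijective
            (fun x : Fin n × Bool => _root_.cond x.2 (ψ x.1).2 (ψ x.1).1)) := by
      apply Finset.filter_congr
      intro ψ _
      exact hcond ψ
    rw [hfil2]
    -- change the sum over valid sequences into a sum over bijections
    have hsum2 : ∑ ψ ∈ Finset.univ.filter
          (fun ψ : Fin n → (Fin (2*n)) × (Fin (2*n)) =>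
            Function.Bijective (fun x : Fin n × Bool => _root_.cond x.2 (ψ x.1).2 (ψ x.1).1)),
          ∏ k, a (ψ k).1 (ψ k).2
        = ∑ χ : (Fin n × Bool) ≃ Fin (2*n), ∏ k, a (χ (k, false)) (χ (k, true)) := by
      refine Finset.sum_bij'
        (fun ψ hψ => Equiv.ofBijective _ (Finset.mem_filter.mp hψ).2)
        (fun χ _ => fun k => (χ (k, false), χ (k, true))) ?_ ?_ ?_ ?_ ?_
      · intro ψ hψ; exact Finset.mem_univ _
      · intro χ _
        refine Finset.mem_filter.mpr ⟨Finset.mem_univ _, ?_⟩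
        have hcomb : (fun x : Fin n × Bool =>
            _root_.cond x.2 ((fun k => (χ (k, false), χ (k, true))) x.1).2
              ((fun k => (χ (k, false), χ (k, true))) x.1).1) = ⇑χ := by
          funext x
          rcases x with ⟨k, b⟩
          cases b <;> rfl
        rw [hcomb]
        exact χ.bijective
      · intro ψ hψ
        funext k
        rfl
      · intro χ _
        apply Equiv.ext
        intro x
        rw [Equiv.ofBijective_apply]
        rcases x with ⟨k, b⟩
        cases b <;> rfl
      · intro ψ hψ
        rfl
    rw [hsum2]
    -- group the bijections according to their pair partition
    rw [← Finset.sum_fiberwise_of_maps_to (fun χ _ => blocks_mem χ)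
      (fun χ : (Fin n × Bool) ≃ Fin (2*n) => ∏ k, a (χ (k, false)) (χ (k, true)))]
    rw [Finset.mul_sum]
    refine Finset.sum_congr rfl fun P hP => ?_
    have hFA : ∀ χ ∈ Finset.univ.filter
        (fun χ : (Fin n × Bool) ≃ Fin (2*n) => blocks χ = P),
        ∏ k, a (χ (k, false)) (χ (k, true)) = ∏ p ∈ P, A p := by
      intro χ hχ
      have hbc := (Finset.mem_filter.mp hχ).2
      rw [← hbc, prod_blocks χ A]
      refine Finset.prod_congr rfl fun k _ => ?_
      have hne : χ (k, false) ≠ χ (k, true) := fun h => by simpa using χ.injective h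
      have hpair : (fun ω => ∏ i ∈ ({χ (k, false), χ (k, true)} : Finset (Fin (2*n))), g i ω)
          = fun ω => g (χ (k, false)) ω * g (χ (k, true)) ω :=
        funext fun ω => Finset.prod_pair hne
      show (∫ ω, g (χ (k, false)) ω * g (χ (k, true)) ω ∂μ)
        = ∫ ω, ∏ i ∈ ({χ (k, false), χ (k, true)} : Finset (Fin (2*n))), g i ω ∂μ
      rw [hpair]
    rw [Finset.sum_congr rfl hFA, Finset.sum_const, card_fiber P hP, nsmul_eq_mul]
  -- conclusion
  have hones := congrArg (MvPolynomial.coeff (allOnes (Fin (2*n)))) hPQ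
  rw [hcoeffP, hcoeffQ] at hones
  have hnum : (odf n : ℝ) * ((2^n * n.factorial : ℕ) : ℝ) = ((2*n).factorial : ℝ) := by
    rw [← Nat.cast_mul]
    exact_mod_cast congrArg (Nat.cast (R := ℝ)) (odf_mul n)
  rw [← mul_assoc, hnum] at hones
  have hfac : ((2*n).factorial : ℝ) ≠ 0 := Nat.cast_ne_zero.mpr (Nat.factorial_ne_zero _)
  exact mul_left_cancel₀ hfac hones
end

section
/- Criterion for absolute continuity: let μ_n and ρ_n be probability measures on a Polish space X converging weakly to μ and ρ respectively. Suppose that for every ε > 0 there exist δ(ε), η(ε) > 0 with δ(ε), η(ε) → 0 as ε → 0 such that: for every continuous F: X → ℝ with 0 < inf F ≤ F ≤ 1 satisfying μ_n({F ≤ ε}) ≥ 1 − δ(ε) for all n ≥ n₀(F), one has limsup_n ∫ F dρ_n ≤ η(ε). Then ρ is absolutely continuous with respect to μ. -/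
open MeasureTheory Filter Topology

/-- Criterion for absolute continuity (Lemma C.1 of Oh–Okamoto–Tolomeo): if probability
measures `μ_n → μ` and `ρ_n → ρ` weakly on a Polish space `X`, and for every `ε > 0` there
are `δ(ε), η(ε) > 0` tending to `0` as `ε → 0⁺` such that every continuous `F : X → ℝ` with
`0 < inf F ≤ F ≤ 1` and `μ_n({F ≤ ε}) ≥ 1 − δ(ε)` for large `n` satisfies
`limsup_n ∫ F dρ_n ≤ η(ε)`, then `ρ ≪ μ`. -/
theorem stmt19 {X : Type*} [MetricSpace X] [TopologicalSpace.SeparableSpace X]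
    [CompleteSpace X] [MeasurableSpace X] [BorelSpace X]
    (μn ρn : ℕ → Measure X) (μ ρ : Measure X)
    (hμn : ∀ n, IsProbabilityMeasure (μn n)) (hρn : ∀ n, IsProbabilityMeasure (ρn n))
    (hμ : IsProbabilityMeasure μ) (hρ : IsProbabilityMeasure ρ)
    (hμconv : ∀ G : BoundedContinuousFunction X ℝ,
      Tendsto (fun n => ∫ x, G x ∂(μn n)) atTop (𝓝 (∫ x, G x ∂μ)))
    (hρconv : ∀ G : BoundedContinuousFunction X ℝ,
      Tendsto (fun n => ∫ x, G x ∂(ρn n)) atTop (𝓝 (∫ x, G x ∂ρ)))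
    (hmain : ∃ δ η : ℝ → ℝ,
      (∀ ε : ℝ, 0 < ε → 0 < δ ε ∧ 0 < η ε) ∧
      Tendsto δ (𝓝[>] (0 : ℝ)) (𝓝 0) ∧ Tendsto η (𝓝[>] (0 : ℝ)) (𝓝 0) ∧
      ∀ ε : ℝ, 0 < ε → ∀ F : X → ℝ, Continuous F →
        (∃ a : ℝ, 0 < a ∧ ∀ x, a ≤ F x) → (∀ x, F x ≤ 1) →
        (∃ n₀ : ℕ, ∀ n ≥ n₀, 1 - δ ε ≤ ((μn n) {x | F x ≤ ε}).toReal) →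
        limsup (fun n => ∫ x, F x ∂(ρn n)) atTop ≤ η ε) :
    ρ ≪ μ := by
  obtain ⟨δ, η, hδη, hδ0, hη0, hcrit⟩ := hmain
  -- weak convergence of `μn` as probability measures
  set P : ℕ → ProbabilityMeasure X := fun n => ⟨μn n, hμn n⟩ with hP
  set Pμ : ProbabilityMeasure X := ⟨μ, hμ⟩ with hPμ
  have hPtend : Tendsto P atTop (𝓝 Pμ) :=
    ProbabilityMeasure.tendsto_iff_forall_integral_tendsto.mpr hμconv
  -- Key step: closed null sets of μ are ρ-null
  have key : ∀ K : Set X, IsClosed K → μ K = 0 → ρ K = 0 := by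
    intro K hK hμK
    have hle : ∀ᶠ ε in 𝓝[>] (0 : ℝ), (ρ K).toReal ≤ η ε := by
      filter_upwards [Ioo_mem_nhdsGT_of_mem (by norm_num : (0:ℝ) ∈ Set.Ico (0:ℝ) 1)]
        with ε hε
      have hε0 : (0:ℝ) < ε := hε.1
      have hε1 : ε < 1 := hε.2
      have hδε : 0 < δ ε := (hδη ε hε0).1
      -- choose an open set U ⊇ K with small measure
      have hμKlt : μ K < ENNReal.ofReal (δ ε) := by
        rw [hμK]; exact ENNReal.ofReal_pos.mpr hδε
      obtain ⟨U, hKU, hUopen, hUlt⟩ := K.exists_isOpen_lt_of_lt _ hμKlt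
      -- interpose an open V with closure V ⊆ U
      obtain ⟨V, hVopen, hKV, hVU⟩ := normal_exists_closure_subset hK hUopen hKU
      -- Urysohn function: 0 on Vᶜ, 1 on K
      obtain ⟨f, hf0, hf1, hf01⟩ := exists_continuous_zero_one_of_isClosed
        (isClosed_compl_iff.mpr hVopen) hK
        (Set.disjoint_left.mpr fun x hx hxK => hx (hKV hxK))
      set F : X → ℝ := fun x => max ε (f x) with hFdef
      have hFcont : Continuous F := continuous_const.max f.continuous
      have hFle1 : ∀ x, F x ≤ 1 := fun x => max_le hε1.le (hf01 x).2
      -- the bounded continuous version of F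
      set G : BoundedContinuousFunction X ℝ :=
        BoundedContinuousFunction.mkOfBound ⟨F, hFcont⟩ 1 (fun x y => by
          have hx : F x ∈ Set.Icc (0:ℝ) 1 := ⟨le_trans hε0.le (le_max_left _ _), hFle1 x⟩
          have hy : F y ∈ Set.Icc (0:ℝ) 1 := ⟨le_trans hε0.le (le_max_left _ _), hFle1 y⟩
          have := Real.dist_le_of_mem_Icc hx hy
          simpa using this) with hG
      -- {F ≤ ε} contains (closure V)ᶜ
      have hsub : (closure V)ᶜ ⊆ {x | F x ≤ ε} := by
        intro x hx
        have hxV : x ∈ Vᶜ := fun hxV => hx (subset_closure hxV)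
        have hfx : f x = 0 := hf0 hxV
        simp only [Set.mem_setOf_eq, hFdef, hfx, max_le_iff]
        exact ⟨le_refl ε, hε0.le⟩
      -- portmanteau: eventually μn (closure V) ≤ ofReal (δ ε)
      have hlimsup : limsup (fun n => (P n : Measure X) (closure V)) atTop
          ≤ (Pμ : Measure X) (closure V) :=
        ProbabilityMeasure.limsup_measure_closed_le_of_tendsto hPtend isClosed_closure
      have hlt : limsup (fun n => (P n : Measure X) (closure V)) atTop
          < ENNReal.ofReal (δ ε) :=
        lt_of_le_of_lt hlimsup (lt_of_le_of_lt (measure_mono hVU) hUlt)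
      have hev : ∀ᶠ n in atTop, (μn n) (closure V) < ENNReal.ofReal (δ ε) :=
        Filter.eventually_lt_of_limsup_lt hlt
      -- the μn-condition of the criterion
      have hμcond : ∃ n₀ : ℕ, ∀ n ≥ n₀, 1 - δ ε ≤ ((μn n) {x | F x ≤ ε}).toReal := by
        obtain ⟨n₀, hn₀⟩ := eventually_atTop.mp hev
        refine ⟨n₀, fun n hn => ?_⟩
        haveI := hμn n
        have h1 : (μn n) (closure V) ≤ ENNReal.ofReal (δ ε) := (hn₀ n hn).le
        have h2 : ENNReal.ofReal (1 - δ ε) ≤ (μn n) ((closure V)ᶜ) := by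
          rw [prob_compl_eq_one_sub isClosed_closure.measurableSet]
          calc ENNReal.ofReal (1 - δ ε)
              = ENNReal.ofReal 1 - ENNReal.ofReal (δ ε) := ENNReal.ofReal_sub 1 hδε.le
            _ = 1 - ENNReal.ofReal (δ ε) := by rw [ENNReal.ofReal_one]
            _ ≤ 1 - (μn n) (closure V) := tsub_le_tsub_left h1 1
        have h3 : ENNReal.ofReal (1 - δ ε) ≤ (μn n) {x | F x ≤ ε} :=
          h2.trans (measure_mono hsub)
        exact (ENNReal.ofReal_le_iff_le_toReal (measure_ne_top _ _)).mp h3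
      -- apply the criterion
      have hls : limsup (fun n => ∫ x, F x ∂(ρn n)) atTop ≤ η ε :=
        hcrit ε hε0 F hFcont ⟨ε, hε0, fun x => le_max_left _ _⟩ hFle1 hμcond
      -- ∫ F dρn → ∫ F dρ
      have htend : Tendsto (fun n => ∫ x, F x ∂(ρn n)) atTop (𝓝 (∫ x, F x ∂ρ)) :=
        hρconv G
      have hlimeq : limsup (fun n => ∫ x, F x ∂(ρn n)) atTop = ∫ x, F x ∂ρ :=
        htend.limsup_eq
      have hint : ∫ x, F x ∂ρ ≤ η ε := hlimeq ▸ hls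
      -- (ρ K).toReal ≤ ∫ F dρ
      have hind : (ρ K).toReal ≤ ∫ x, F x ∂ρ := by
        have heq : ∫ x, K.indicator (fun _ => (1:ℝ)) x ∂ρ = (ρ K).toReal := by
          rw [integral_indicator_const (1:ℝ) hK.measurableSet, smul_eq_mul, mul_one]; rfl
        rw [← heq]
        refine integral_mono ((integrable_const (1:ℝ)).indicator hK.measurableSet)
          (G.integrable ρ) (fun x => ?_)
        by_cases hx : x ∈ K
        · rw [Set.indicator_of_mem hx]
          have : f x = 1 := hf1 hx
          simp only [hFdef, this]
          exact le_max_right _ _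
        · rw [Set.indicator_of_notMem hx]
          exact le_trans hε0.le (le_max_left _ _)
      linarith
    have h0 : (ρ K).toReal ≤ 0 := ge_of_tendsto hη0 hle
    have hzero : (ρ K).toReal = 0 := le_antisymm h0 ENNReal.toReal_nonneg
    rcases (ENNReal.toReal_eq_zero_iff _).mp hzero with h | h
    · exact h
    · exact absurd h (measure_ne_top ρ K)
  -- conclude absolute continuity using inner regularity by closed sets
  intro s hs
  obtain ⟨t, hst, htm, htμ⟩ := exists_measurable_superset_of_null hs
  have hρt : ρ t = 0 := by
    by_contra h
    obtain ⟨K, hKt, hKclosed, hKpos⟩ :=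
      MeasureTheory.Measure.WeaklyRegular.innerRegular_measurable (μ := ρ)
        ⟨htm, measure_ne_top ρ t⟩ 0 (pos_iff_ne_zero.mpr h)
    have hμK : μ K = 0 := measure_mono_null hKt htμ
    exact absurd (key K hKclosed hμK) (pos_iff_ne_zero.mp hKpos)
  exact measure_mono_null hst hρt
end
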